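/- arXiv:1509.03130 — 6 statements merged into one kernel-verified Lean document; each statement's English description precedes it below -/
import Mathlib

section
/- Let p, r ∈ [2, ∞) be real numbers and set C_{r,p} := (r−1)·(p/(p+r−2))^p. Then for all real numbers z and t one has |z−t|^{p−2}(z−t)·(|z|^{r−2}z − |t|^{r−2}t) ≥ C_{r,p}·| |z|^{(r−2)/p}z − |t|^{(r−2)/p}t |^p. -/
open MeasureTheory Set Real Filter

lemma sv_hasDerivAt {β : ℝ} (hβ : 0 ≤ β) (x : ℝ) :
    HasDerivAt (fun s : ℝ => |s| ^ β * s) ((β + 1) * |x| ^ β) x := by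
  rcases eq_or_lt_of_le hβ with h0 | h0
  · subst h0
    simp only [Real.rpow_zero, one_mul, zero_add]
    exact hasDerivAt_id' x
  rcases lt_trichotomy x 0 with hx | hx | hx
  · have h1 : HasDerivAt (fun s : ℝ => -((-s) ^ (β + 1))) ((β + 1) * |x| ^ β) x := by
      have h2 : HasDerivAt (fun s : ℝ => (-s) ^ (β + 1))
          ((β + 1) * (-x) ^ (β + 1 - 1) * (-1)) x :=
        (Real.hasDerivAt_rpow_const (p := β + 1)
          (Or.inl (neg_ne_zero.mpr hx.ne))).comp x (hasDerivAt_neg x)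
      have := h2.neg
      refine this.congr_deriv ?_
      rw [abs_of_neg hx]
      ring_nf
    refine h1.congr_of_eventuallyEq ?_
    filter_upwards [Iio_mem_nhds hx] with s hs
    have hs' : (0:ℝ) < -s := by simpa using hs
    rw [abs_of_neg (show s < 0 from hs), Real.rpow_add_one (ne_of_gt hs')]
    ring
  · subst hx
    rw [hasDerivAt_iff_tendsto_slope]
    have hlim : Tendsto (fun s : ℝ => |s| ^ β) (nhdsWithin 0 {(0:ℝ)}ᶜ) (nhds ((β + 1) * |(0:ℝ)| ^ β)) := by
      have hc : ContinuousAt (fun s : ℝ => |s| ^ β) 0 :=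
        (Real.continuousAt_rpow_const _ _ (Or.inr hβ)).comp continuous_abs.continuousAt
      have h3 : Tendsto (fun s : ℝ => |s| ^ β) (nhdsWithin 0 {(0:ℝ)}ᶜ) (nhds (|(0:ℝ)| ^ β)) :=
        hc.tendsto.mono_left nhdsWithin_le_nhds
      convert h3 using 2
      simp [Real.zero_rpow h0.ne']
    refine hlim.congr' ?_
    filter_upwards [self_mem_nhdsWithin] with s hs
    have hs' : s ≠ 0 := hs
    simp only [slope_def_field, abs_zero, Real.zero_rpow h0.ne', zero_mul, sub_zero]
    field_simp
  · have h1 : HasDerivAt (fun s : ℝ => s ^ (β + 1)) ((β + 1) * |x| ^ β) x := by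
      have h2 := Real.hasDerivAt_rpow_const (x := x) (p := β + 1) (Or.inl hx.ne')
      convert h2 using 1
      rw [abs_of_pos hx]
      ring_nf
    refine h1.congr_of_eventuallyEq ?_
    filter_upwards [Ioi_mem_nhds hx] with s hs
    rw [abs_of_pos (show (0:ℝ) < s from hs), Real.rpow_add_one (ne_of_gt hs)]

lemma sv_ftc {β : ℝ} (hβ : 0 ≤ β) (t z : ℝ) :
    (β + 1) * ∫ s in t..z, |s| ^ β = |z| ^ β * z - |t| ^ β * t := by
  rw [← intervalIntegral.integral_const_mul]
  exact intervalIntegral.integral_eq_sub_of_hasDerivAt (fun x _ => sv_hasDerivAt hβ x)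
    ((continuous_const.mul ((Real.continuous_rpow_const hβ).comp
      continuous_abs)).intervalIntegrable t z)

lemma sv_holder {β p : ℝ} (hβ : 0 ≤ β) (hp : 2 ≤ p) {t z : ℝ} (htz : t ≤ z) :
    ∫ s in t..z, |s| ^ β ≤
      (∫ s in t..z, |s| ^ (β * p)) ^ (1 / p) * (z - t) ^ (1 - 1 / p) := by
  have hp1 : 1 < p := by linarith
  set q : ℝ := Real.conjExponent p with hq
  have hpq : p.HolderConjugate q := Real.HolderConjugate.conjExponent hp1
  set μ : Measure ℝ := volume.restrict (Ioc t z) with hμ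
  haveI : IsFiniteMeasure μ := by
    refine ⟨?_⟩
    rw [hμ, Measure.restrict_apply_univ, Real.volume_Ioc]
    exact ENNReal.ofReal_lt_top
  have hfc : Continuous (fun s : ℝ => |s| ^ β) :=
    (Real.continuous_rpow_const hβ).comp continuous_abs
  have hf : MemLp (fun s : ℝ => |s| ^ β) (ENNReal.ofReal p) μ := by
    refine MemLp.of_bound hfc.aestronglyMeasurable ((max |t| |z|) ^ β) ?_
    filter_upwards [ae_restrict_mem measurableSet_Ioc] with s hs
    rw [Real.norm_of_nonneg (Real.rpow_nonneg (abs_nonneg s) β)]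
    exact Real.rpow_le_rpow (abs_nonneg s) (abs_le_max_abs_abs hs.1.le hs.2) hβ
  have hg : MemLp (fun _ : ℝ => (1 : ℝ)) (ENNReal.ofReal q) μ := memLp_const 1
  have H := integral_mul_le_Lp_mul_Lq_of_nonneg hpq
    (ae_of_all μ fun s => Real.rpow_nonneg (abs_nonneg s) β)
    (ae_of_all μ fun _ => zero_le_one) hf hg
  have e1 : ∫ a, |a| ^ β * 1 ∂μ = ∫ s in t..z, |s| ^ β := by
    rw [intervalIntegral.integral_of_le htz]; simp [hμ]
  have e2 : ∫ a, (|a| ^ β) ^ p ∂μ = ∫ s in t..z, |s| ^ (β * p) := by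
    rw [intervalIntegral.integral_of_le htz]
    refine integral_congr_ae (ae_of_all _ fun s => ?_)
    show (|s| ^ β) ^ p = |s| ^ (β * p)
    rw [← Real.rpow_mul (abs_nonneg s)]
  have e3 : ∫ _ : ℝ, (1 : ℝ) ^ q ∂μ = z - t := by
    simp [hμ, Real.volume_Ioc, ENNReal.toReal_ofReal (sub_nonneg.mpr htz), htz]
  have e4 : 1 / q = 1 - 1 / p := by
    have := hpq.inv_add_inv_eq_one
    rw [one_div, one_div]
    linarith
  rw [e1, e2, e3, e4] at H
  exact H

lemma sv_key (p r : ℝ) (hp : 2 ≤ p) (hr : 2 ≤ r) {t z : ℝ} (htz : t < z) :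
    (r - 1) * (p / (p + r - 2)) ^ p *
        |(|z| ^ ((r - 2) / p) * z - |t| ^ ((r - 2) / p) * t)| ^ p ≤
      |z - t| ^ (p - 2) * (z - t) * (|z| ^ (r - 2) * z - |t| ^ (r - 2) * t) := by
  have hp0 : (0:ℝ) < p := by linarith
  have hpr : (0:ℝ) < p + r - 2 := by linarith
  set β : ℝ := (r - 2) / p with hβdef
  have hβ : 0 ≤ β := div_nonneg (by linarith) hp0.le
  have hα : 0 ≤ r - 2 := by linarith
  set A : ℝ := ∫ s in t..z, |s| ^ (r - 2) with hA
  set B : ℝ := ∫ s in t..z, |s| ^ β with hB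
  have hA0 : 0 ≤ A := intervalIntegral.integral_nonneg htz.le
    (fun s _ => Real.rpow_nonneg (abs_nonneg s) _)
  have hB0 : 0 ≤ B := intervalIntegral.integral_nonneg htz.le
    (fun s _ => Real.rpow_nonneg (abs_nonneg s) _)
  have hzt : (0:ℝ) < z - t := sub_pos.mpr htz
  have hFTCα : (r - 2 + 1) * A = |z| ^ (r - 2) * z - |t| ^ (r - 2) * t := sv_ftc hα t z
  have hFTCβ : (β + 1) * B = |z| ^ β * z - |t| ^ β * t := sv_ftc hβ t z
  have hβp : β * p = r - 2 := div_mul_cancel₀ _ hp0.ne'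
  have hH : B ≤ A ^ (1 / p) * (z - t) ^ (1 - 1 / p) := by
    have := sv_holder hβ hp htz.le
    rwa [hβp] at this
  -- bound the difference of signed β-powers
  have hD : |(|z| ^ β * z - |t| ^ β * t)| = (β + 1) * B := by
    rw [← hFTCβ, abs_of_nonneg (mul_nonneg (by linarith) hB0)]
  rw [hD]
  -- raise Hölder to the power p
  have hstep : ((β + 1) * B) ^ p ≤ (β + 1) ^ p * (A * (z - t) ^ (p - 1)) := by
    have h1 : (β + 1) * B ≤ (β + 1) * (A ^ (1 / p) * (z - t) ^ (1 - 1 / p)) :=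
      mul_le_mul_of_nonneg_left hH (by linarith)
    have h2 : ((β + 1) * B) ^ p ≤ ((β + 1) * (A ^ (1 / p) * (z - t) ^ (1 - 1 / p))) ^ p :=
      Real.rpow_le_rpow (mul_nonneg (by linarith) hB0) h1 hp0.le
    refine h2.trans_eq ?_
    rw [Real.mul_rpow (by linarith) (mul_nonneg (Real.rpow_nonneg hA0 _)
        (Real.rpow_nonneg hzt.le _)),
      Real.mul_rpow (Real.rpow_nonneg hA0 _) (Real.rpow_nonneg hzt.le _),
      ← Real.rpow_mul hA0, ← Real.rpow_mul hzt.le, one_div_mul_cancel hp0.ne',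
      Real.rpow_one, show (1 - 1 / p) * p = p - 1 by field_simp]
  have hone : (p / (p + r - 2)) ^ p * (β + 1) ^ p = 1 := by
    rw [← Real.mul_rpow (by positivity) (by linarith)]
    have h5 : p / (p + r - 2) * (β + 1) = 1 := by
      rw [hβdef]; field_simp; ring
    rw [h5, Real.one_rpow]
  calc (r - 1) * (p / (p + r - 2)) ^ p * ((β + 1) * B) ^ p
      ≤ (r - 1) * (p / (p + r - 2)) ^ p * ((β + 1) ^ p * (A * (z - t) ^ (p - 1))) := by
        refine mul_le_mul_of_nonneg_left hstep
          (mul_nonneg (by linarith) (Real.rpow_nonneg (by positivity) _))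
    _ = (r - 1) * A * (z - t) ^ (p - 1) := by
        rw [show (r - 1) * (p / (p + r - 2)) ^ p * ((β + 1) ^ p * (A * (z - t) ^ (p - 1)))
            = (r - 1) * ((p / (p + r - 2)) ^ p * (β + 1) ^ p) * (A * (z - t) ^ (p - 1)) by ring,
          hone]
        ring
    _ = |z - t| ^ (p - 2) * (z - t) * (|z| ^ (r - 2) * z - |t| ^ (r - 2) * t) := by
        rw [← hFTCα, abs_of_pos hzt,
          show p - 1 = (p - 2) + 1 by ring, Real.rpow_add_one hzt.ne']
        ring



/-- Pointwise nonlinear Stroock–Varopoulos inequality: for `p, r ∈ [2, ∞)` and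
`C_{r,p} = (r-1)(p/(p+r-2))^p`, for all reals `z, t`,
`|z-t|^{p-2}(z-t)(|z|^{r-2}z - |t|^{r-2}t) ≥ C_{r,p} ||z|^{(r-2)/p}z - |t|^{(r-2)/p}t|^p`. -/
theorem pointwise_stroock_varopoulos (p r : ℝ) (hp : 2 ≤ p) (hr : 2 ≤ r) (z t : ℝ) :
    (r - 1) * (p / (p + r - 2)) ^ p *
        |(|z| ^ ((r - 2) / p) * z - |t| ^ ((r - 2) / p) * t)| ^ p ≤
      |z - t| ^ (p - 2) * (z - t) * (|z| ^ (r - 2) * z - |t| ^ (r - 2) * t) := by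
  rcases lt_trichotomy t z with h | h | h
  · exact sv_key p r hp hr h
  · subst h
    simp [Real.zero_rpow (show p ≠ 0 by linarith)]
  · calc (r - 1) * (p / (p + r - 2)) ^ p *
        |(|z| ^ ((r - 2) / p) * z - |t| ^ ((r - 2) / p) * t)| ^ p
        = (r - 1) * (p / (p + r - 2)) ^ p *
          |(|t| ^ ((r - 2) / p) * t - |z| ^ ((r - 2) / p) * z)| ^ p := by
          rw [abs_sub_comm]
      _ ≤ |t - z| ^ (p - 2) * (t - z) * (|t| ^ (r - 2) * t - |z| ^ (r - 2) * z) :=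
          sv_key p r hp hr h
      _ = |z - t| ^ (p - 2) * (z - t) * (|z| ^ (r - 2) * z - |t| ^ (r - 2) * t) := by
          rw [abs_sub_comm t z]
          ring
end

section
/- Let N ≥ 1 be an integer, let p, r ∈ [2, ∞) be real numbers, and set C_{r,p} := (r−1)·(p/(p+r−2))^p. Let K : ℝ^N × ℝ^N → [0, ∞] be measurable and let u : ℝ^N → ℝ be measurable; define v(x) := |u(x)|^{(r−2)/p} u(x). Then C_{r,p} · ∬_{ℝ^N×ℝ^N} |v(x)−v(y)|^p · K(x,y) dx dy ≤ ∬_{ℝ^N×ℝ^N} |u(x)−u(y)|^{p−2}(u(x)−u(y))·(|u(x)|^{r−2}u(x) − |u(y)|^{r−2}u(y)) · K(x,y) dx dy, where both sides are (possibly infinite) integrals of nonnegative measurable functions; in particular the integrand on the right-hand side is pointwise nonnegative. -/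
open MeasureTheory
open scoped ENNReal

noncomputable def sgnPow (β t : ℝ) : ℝ := |t| ^ β * t

lemma continuous_abs_rpow (β : ℝ) (hβ : 0 ≤ β) : Continuous fun t : ℝ => |t| ^ β :=
  continuous_abs.rpow_const (fun x => Or.inr hβ)

lemma hasDerivAt_sgnPow (β : ℝ) (hβ : 0 ≤ β) (t : ℝ) :
    HasDerivAt (fun s => |s| ^ β * s) ((β + 1) * |t| ^ β) t := by
  rcases eq_or_lt_of_le hβ with h0 | h0
  · subst h0
    simpa using (hasDerivAt_id' t)
  rcases eq_or_ne t 0 with rfl | ht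
  · rw [hasDerivAt_iff_tendsto_slope]
    have hlim : Filter.Tendsto (fun s : ℝ => |s| ^ β) (nhdsWithin 0 {(0:ℝ)}ᶜ) (nhds ((β + 1) * |(0:ℝ)| ^ β)) := by
      have : ((β + 1) * |(0:ℝ)| ^ β) = |(0:ℝ)| ^ β := by
        rw [abs_zero, Real.zero_rpow h0.ne']; ring
      rw [this]
      exact ((continuous_abs_rpow β hβ).tendsto 0).mono_left nhdsWithin_le_nhds
    refine hlim.congr' ?_
    filter_upwards [self_mem_nhdsWithin] with s hs
    have hs0 : s ≠ 0 := hs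
    simp [slope, sgnPow, abs_zero, Real.zero_rpow h0.ne', mul_comm, mul_div_assoc,
      div_self hs0]
    field_simp
  · have habs : HasDerivAt (fun s : ℝ => |s|) (SignType.sign t : ℝ) t := hasDerivAt_abs ht
    have hr : HasDerivAt (fun y : ℝ => y ^ β) (β * |t| ^ (β - 1)) |t| :=
      Real.hasDerivAt_rpow_const (Or.inl (abs_ne_zero.2 ht))
    have h1 : HasDerivAt (fun s : ℝ => |s| ^ β) (β * |t| ^ (β - 1) * (SignType.sign t : ℝ)) t :=
      (hr.comp t habs)
    have h2 := h1.mul (hasDerivAt_id t)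
    refine h2.congr_deriv (Eq.symm ?_)
    have hsgn : (SignType.sign t : ℝ) * t = |t| := by
      rcases lt_or_gt_of_ne ht with h | h
      · simp [h, abs_of_neg h]
      · simp [h, abs_of_pos h]
    have hpow : |t| ^ (β - 1) * |t| = |t| ^ β := by
      rw [← Real.rpow_add_one (abs_ne_zero.2 ht) (β - 1)]; ring_nf
    calc (β + 1) * |t| ^ β = β * (|t| ^ (β - 1) * |t|) + |t| ^ β := by rw [hpow]; ring
    _ = β * |t| ^ (β - 1) * (SignType.sign t : ℝ) * t + |t| ^ β * 1 := by
        rw [mul_assoc (β * |t| ^ (β - 1)), hsgn, mul_one]; ring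

lemma sgnPow_monotone (β : ℝ) (hβ : 0 ≤ β) : Monotone fun t : ℝ => |t| ^ β * t := by
  apply monotone_of_deriv_nonneg
  · exact fun t => (hasDerivAt_sgnPow β hβ t).differentiableAt
  · intro t
    rw [(hasDerivAt_sgnPow β hβ t).deriv]
    positivity

lemma sgnPow_integral (β : ℝ) (hβ : 0 ≤ β) {a b : ℝ} :
    ∫ t in b..a, |t| ^ β = (|a| ^ β * a - |b| ^ β * b) / (β + 1) := by
  have h := intervalIntegral.integral_eq_sub_of_hasDerivAt
    (f := fun s : ℝ => |s| ^ β * s) (f' := fun s => (β + 1) * |s| ^ β) (a := b) (b := a)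
    (fun x _ => hasDerivAt_sgnPow β hβ x)
    (((continuous_const.mul (continuous_abs_rpow β hβ))).intervalIntegrable b a)
  rw [intervalIntegral.integral_const_mul] at h
  have hβ1 : β + 1 ≠ 0 := by positivity
  field_simp
  linarith [h]

lemma holder_step (β p q : ℝ) (hβ : 0 ≤ β) (hpq : Real.HolderConjugate p q) {a b : ℝ}
    (hba : b ≤ a) :
    ∫ t in b..a, |t| ^ β ≤ (∫ t in b..a, |t| ^ (β * p)) ^ (1/p) * (a - b) ^ (1/q) := by
  set μ := volume.restrict (Set.Ioc b a) with hμ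
  set f : ℝ → ENNReal := fun t => ENNReal.ofReal (|t| ^ β) with hf
  have hfm : Measurable f := (continuous_abs_rpow β hβ).measurable.ennreal_ofReal
  have H := ENNReal.lintegral_mul_le_Lp_mul_Lq μ hpq hfm.aemeasurable
    (aemeasurable_const (b := (1 : ENNReal)))
  have hint1 : Integrable (fun t : ℝ => |t| ^ β) μ :=
    (continuous_abs_rpow β hβ).integrableOn_Ioc
  have hint2 : Integrable (fun t : ℝ => |t| ^ (β * p)) μ :=
    (continuous_abs_rpow (β * p) (mul_nonneg hβ hpq.pos.le)).integrableOn_Ioc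
  simp only [Pi.mul_apply, mul_one, ENNReal.one_rpow] at H
  have e1 : ∫⁻ t, f t ∂μ = ENNReal.ofReal (∫ t in b..a, |t| ^ β) := by
    rw [intervalIntegral.integral_of_le hba,
      ofReal_integral_eq_lintegral_ofReal hint1
        (Filter.Eventually.of_forall fun t => Real.rpow_nonneg (abs_nonneg t) β)]
  have e2 : ∫⁻ t, f t ^ p ∂μ = ENNReal.ofReal (∫ t in b..a, |t| ^ (β * p)) := by
    rw [intervalIntegral.integral_of_le hba,
      ofReal_integral_eq_lintegral_ofReal hint2
        (Filter.Eventually.of_forall fun t => Real.rpow_nonneg (abs_nonneg t) _)]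
    refine lintegral_congr fun t => ?_
    rw [hf, ENNReal.ofReal_rpow_of_nonneg (Real.rpow_nonneg (abs_nonneg t) β) hpq.pos.le,
      ← Real.rpow_mul (abs_nonneg t)]
  have e3 : ∫⁻ _t, (1:ENNReal) ∂μ = ENNReal.ofReal (a - b) := by
    simp [hμ, Real.volume_Ioc]
  rw [e1, e2, e3] at H
  have hJ : 0 ≤ ∫ t in b..a, |t| ^ (β * p) :=
    intervalIntegral.integral_nonneg hba fun t _ => Real.rpow_nonneg (abs_nonneg t) _
  rw [ENNReal.ofReal_rpow_of_nonneg hJ (one_div_pos.2 hpq.pos).le,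
    ENNReal.ofReal_rpow_of_nonneg (by linarith) (one_div_pos.2 hpq.symm.pos).le,
    ← ENNReal.ofReal_mul (Real.rpow_nonneg hJ _)] at H
  exact (ENNReal.ofReal_le_ofReal_iff
    (mul_nonneg (Real.rpow_nonneg hJ _) (Real.rpow_nonneg (by linarith) _))).1 H

lemma key_le (p r : ℝ) (hp : 2 ≤ p) (hr : 2 ≤ r) {a b : ℝ} (hba : b ≤ a) :
    (r - 1) * (p / (p + r - 2)) ^ p * |(|a| ^ ((r - 2) / p) * a) - |b| ^ ((r - 2) / p) * b| ^ p
      ≤ |a - b| ^ (p - 2) * (a - b) * ((|a| ^ (r - 2) * a) - |b| ^ (r - 2) * b) := by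
  have hp0 : (0:ℝ) < p := by linarith
  have hp1 : (1:ℝ) < p := by linarith
  have hprs : (0:ℝ) < p + r - 2 := by linarith
  set β : ℝ := (r - 2) / p with hβdef
  have hβ : 0 ≤ β := div_nonneg (by linarith) hp0.le
  set m : ℝ := (p + r - 2) / p with hmdef
  have hm : 0 < m := div_pos hprs hp0
  have hβ1 : β + 1 = m := by
    rw [hβdef, hmdef]; field_simp; ring
  rcases eq_or_lt_of_le hba with rfl | hlt
  · have hpne : p ≠ 0 := by positivity
    simp only [sub_self, abs_zero, Real.zero_rpow hpne, mul_zero, zero_mul]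
    exact le_rfl
  · set q : ℝ := p.conjExponent with hqdef
    have hpq : p.HolderConjugate q := Real.HolderConjugate.conjExponent hp1
    have hβp : β * p = r - 2 := div_mul_cancel₀ _ hp0.ne'
    set Δv : ℝ := |a| ^ β * a - |b| ^ β * b with hΔv
    set Δ : ℝ := |a| ^ (r - 2) * a - |b| ^ (r - 2) * b with hΔ
    have hΔv0 : 0 ≤ Δv := sub_nonneg.2 (sgnPow_monotone β hβ hba)
    have hΔ0 : 0 ≤ Δ := sub_nonneg.2 (sgnPow_monotone (r - 2) (by linarith) hba)
    set J : ℝ := ∫ t in b..a, |t| ^ (β * p) with hJdef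
    have hJ0 : 0 ≤ J :=
      intervalIntegral.integral_nonneg hba fun t _ => Real.rpow_nonneg (abs_nonneg t) _
    have hJE : J = Δ / (r - 1) := by
      rw [hJdef, hβp, sgnPow_integral (r - 2) (by linarith),
        show r - 2 + 1 = r - 1 by ring]
    have hIE : (∫ t in b..a, |t| ^ β) = Δv / m := by
      rw [sgnPow_integral β hβ, hβ1]
    have hH := holder_step β p q hβ hpq hba
    rw [hIE, ← hJdef] at hH
    have hΔv_le : Δv ≤ m * (J ^ (1/p) * (a - b) ^ (1/q)) := by
      rw [div_le_iff₀ hm] at hH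
      · linarith [hH]
    have hab0 : (0:ℝ) < a - b := by linarith
    have hq1 : (1/q) * p = p - 1 := by
      have h1 : p⁻¹ + q⁻¹ = 1 := hpq.inv_add_inv_eq_one
      have : 1/q = 1 - 1/p := by rw [one_div, one_div]; linarith
      rw [this]; field_simp
    have hrhs0 : 0 ≤ m * (J ^ (1/p) * (a - b) ^ (1/q)) := by
      have := Real.rpow_nonneg hJ0 (1/p)
      have := Real.rpow_nonneg hab0.le (1/q)
      positivity
    have hpow : Δv ^ p ≤ m ^ p * (J * (a - b) ^ (p - 1)) := by
      calc Δv ^ p ≤ (m * (J ^ (1/p) * (a - b) ^ (1/q))) ^ p :=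
            Real.rpow_le_rpow hΔv0 hΔv_le hp0.le
        _ = m ^ p * ((J ^ (1/p)) ^ p * ((a - b) ^ (1/q)) ^ p) := by
            rw [Real.mul_rpow hm.le (by positivity), Real.mul_rpow (Real.rpow_nonneg hJ0 _)
              (Real.rpow_nonneg hab0.le _)]
        _ = m ^ p * (J * (a - b) ^ (p - 1)) := by
            rw [← Real.rpow_mul hJ0, ← Real.rpow_mul hab0.le, one_div_mul_cancel hp0.ne',
              Real.rpow_one, hq1]
    have habs_v : |(|a| ^ β * a) - |b| ^ β * b| = Δv := abs_of_nonneg hΔv0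
    have habs_ab : |a - b| = a - b := abs_of_pos hab0
    have hCm : (p / (p + r - 2)) ^ p * m ^ p = 1 := by
      rw [← Real.mul_rpow (by positivity) hm.le]
      have : p / (p + r - 2) * m = 1 := by
        rw [hmdef]; field_simp
      rw [this, Real.one_rpow]
    have hC0 : (0:ℝ) ≤ (r - 1) * (p / (p + r - 2)) ^ p := by
      have := Real.rpow_nonneg (by positivity : (0:ℝ) ≤ p / (p + r - 2)) p
      nlinarith
    calc (r - 1) * (p / (p + r - 2)) ^ p * |(|a| ^ β * a) - |b| ^ β * b| ^ p
        = (r - 1) * (p / (p + r - 2)) ^ p * Δv ^ p := by rw [habs_v]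
      _ ≤ (r - 1) * (p / (p + r - 2)) ^ p * (m ^ p * (J * (a - b) ^ (p - 1))) :=
          mul_le_mul_of_nonneg_left hpow hC0
      _ = (r - 1) * ((p / (p + r - 2)) ^ p * m ^ p) * (J * (a - b) ^ (p - 1)) := by ring
      _ = (r - 1) * (J * (a - b) ^ (p - 1)) := by rw [hCm, mul_one]
      _ = (a - b) ^ (p - 1) * Δ := by
          have hΔc : (r - 1) * (Δ / (r - 1)) = Δ := by
            rw [mul_comm, div_mul_eq_mul_div, mul_div_assoc,
              div_self (show r - 1 ≠ 0 by linarith), mul_one]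
          rw [hJE, ← mul_assoc, hΔc, mul_comm]
      _ = |a - b| ^ (p - 2) * (a - b) * Δ := by
          rw [habs_ab, ← Real.rpow_add_one hab0.ne' (p - 2),
            show p - 2 + 1 = p - 1 by ring]

lemma key_ineq (p r : ℝ) (hp : 2 ≤ p) (hr : 2 ≤ r) (a b : ℝ) :
    (r - 1) * (p / (p + r - 2)) ^ p * |(|a| ^ ((r - 2) / p) * a) - |b| ^ ((r - 2) / p) * b| ^ p
      ≤ |a - b| ^ (p - 2) * (a - b) * ((|a| ^ (r - 2) * a) - |b| ^ (r - 2) * b) := by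
  rcases le_total b a with h | h
  · exact key_le p r hp hr h
  · have h2 := key_le p r hp hr h
    have e1 : |(|a| ^ ((r - 2) / p) * a) - |b| ^ ((r - 2) / p) * b|
        = |(|b| ^ ((r - 2) / p) * b) - |a| ^ ((r - 2) / p) * a| := abs_sub_comm _ _
    have e2 : |a - b| ^ (p - 2) * (a - b) * ((|a| ^ (r - 2) * a) - |b| ^ (r - 2) * b)
        = |b - a| ^ (p - 2) * (b - a) * ((|b| ^ (r - 2) * b) - |a| ^ (r - 2) * a) := by
      rw [abs_sub_comm a b]; ring
    rw [e1, e2]; exact h2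

/-- Nonlinear Stroock–Varopoulos comparison of energy forms (Lemma `comp`):
for `p, r ∈ [2, ∞)`, `C_{r,p} = (r-1)(p/(p+r-2))^p`, a measurable nonnegative kernel
`K` on `ℝ^N × ℝ^N` and a measurable `u : ℝ^N → ℝ`, setting `v = |u|^{(r-2)/p} u`, the
integrand `|u(x)-u(y)|^{p-2}(u(x)-u(y))(|u(x)|^{r-2}u(x) - |u(y)|^{r-2}u(y))` is
pointwise nonnegative and
`C_{r,p} ∬ |v(x)-v(y)|^p K(x,y) ≤ ∬ |u(x)-u(y)|^{p-2}(u(x)-u(y))(|u|^{r-2}u(x)-|u|^{r-2}u(y)) K(x,y)`. -/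
theorem stroock_varopoulos_energy (N : ℕ) (hN : 1 ≤ N) (p r : ℝ) (hp : 2 ≤ p) (hr : 2 ≤ r)
    (K : (Fin N → ℝ) × (Fin N → ℝ) → ℝ≥0∞) (hK : Measurable K)
    (u : (Fin N → ℝ) → ℝ) (hu : Measurable u)
    (v : (Fin N → ℝ) → ℝ) (hv : v = fun x => |u x| ^ ((r - 2) / p) * u x) :
    (∀ x y : Fin N → ℝ,
        0 ≤ |u x - u y| ^ (p - 2) * (u x - u y) *
            (|u x| ^ (r - 2) * u x - |u y| ^ (r - 2) * u y)) ∧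
      ENNReal.ofReal ((r - 1) * (p / (p + r - 2)) ^ p) *
          ∫⁻ z : (Fin N → ℝ) × (Fin N → ℝ),
            ENNReal.ofReal (|v z.1 - v z.2| ^ p) * K z ≤
        ∫⁻ z : (Fin N → ℝ) × (Fin N → ℝ),
          ENNReal.ofReal (|u z.1 - u z.2| ^ (p - 2) * (u z.1 - u z.2) *
            (|u z.1| ^ (r - 2) * u z.1 - |u z.2| ^ (r - 2) * u z.2)) * K z := by
  have hC0 : 0 ≤ (r - 1) * (p / (p + r - 2)) ^ p := by
    apply mul_nonneg (by linarith)
    exact Real.rpow_nonneg (div_nonneg (by linarith) (by linarith)) p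
  constructor
  · intro x y
    have h3 : 0 ≤ |u x - u y| ^ (p - 2) := Real.rpow_nonneg (abs_nonneg _) _
    rcases le_total (u y) (u x) with h | h
    · exact mul_nonneg (mul_nonneg h3 (sub_nonneg.2 h))
        (sub_nonneg.2 (sgnPow_monotone (r - 2) (by linarith) h))
    · have h1 : |u x - u y| ^ (p - 2) * (u x - u y) ≤ 0 :=
        mul_nonpos_of_nonneg_of_nonpos h3 (sub_nonpos.2 h)
      have h2 : |u x| ^ (r - 2) * u x - |u y| ^ (r - 2) * u y ≤ 0 :=
        sub_nonpos.2 (sgnPow_monotone (r - 2) (by linarith) h)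
      have := mul_nonneg (neg_nonneg.2 h1) (neg_nonneg.2 h2)
      rwa [neg_mul_neg] at this
  · subst hv
    rw [← lintegral_const_mul' (ENNReal.ofReal ((r - 1) * (p / (p + r - 2)) ^ p)) _
      ENNReal.ofReal_ne_top]
    apply lintegral_mono
    intro z
    calc ENNReal.ofReal ((r - 1) * (p / (p + r - 2)) ^ p) *
          (ENNReal.ofReal (|(|u z.1| ^ ((r - 2) / p) * u z.1) -
            |u z.2| ^ ((r - 2) / p) * u z.2| ^ p) * K z)
        = ENNReal.ofReal ((r - 1) * (p / (p + r - 2)) ^ p *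
            |(|u z.1| ^ ((r - 2) / p) * u z.1) - |u z.2| ^ ((r - 2) / p) * u z.2| ^ p) * K z := by
          rw [← mul_assoc, ← ENNReal.ofReal_mul hC0]
      _ ≤ ENNReal.ofReal (|u z.1 - u z.2| ^ (p - 2) * (u z.1 - u z.2) *
            (|u z.1| ^ (r - 2) * u z.1 - |u z.2| ^ (r - 2) * u z.2)) * K z :=
          mul_le_mul_of_nonneg_right (ENNReal.ofReal_le_ofReal (key_ineq p r hp hr (u z.1) (u z.2))) zero_le
end

section
/- Let N ≥ 1 be an integer, s ∈ (0,1), p ∈ [2, ∞) a real number, and set C_{N,p,s} := s·2^{2s}·Γ((ps+p+N−2)/2)/(π^{N/2}·Γ(1−s)). For a measurable w : ℝ^N → ℝ let Φ(w) := (C_{N,p,s}/(2p)) ∬_{ℝ^N×ℝ^N} |w(x)−w(y)|^p/|x−y|^{N+sp} dx dy. Let u, v : ℝ^N → ℝ be measurable with Φ(u) < ∞ and Φ(v) < ∞. Then the function (x,y) ↦ |u(x)−u(y)|^{p−2}(u(x)−u(y))·((v−u)(x)−(v−u)(y))/|x−y|^{N+sp} is integrable on ℝ^N × ℝ^N and Φ(v)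 − Φ(u) ≥ (C_{N,p,s}/2) ∬_{ℝ^N×ℝ^N} |u(x)−u(y)|^{p−2}(u(x)−u(y))·((v−u)(x)−(v−u)(y))/|x−y|^{N+sp} dx dy. -/
open MeasureTheory
open scoped ENNReal

/-- The (possibly infinite) Gagliardo `p`-energy
`∬_{ℝ^N×ℝ^N} |w(x)-w(y)|^p/|x-y|^{N+sp} dx dy`. -/
noncomputable def gagliardoEnergy (N : ℕ) (s p : ℝ)
    (w : EuclideanSpace ℝ (Fin N) → ℝ) : ℝ≥0∞ :=
  ∫⁻ z : EuclideanSpace ℝ (Fin N) × EuclideanSpace ℝ (Fin N),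
    ENNReal.ofReal (|w z.1 - w z.2| ^ p / ‖z.1 - z.2‖ ^ ((N : ℝ) + s * p))


private lemma rpow_succ_aux {x : ℝ} (hx : 0 ≤ x) {q : ℝ} (hq : 0 < q + 1) :
    x ^ q * x = x ^ (q + 1) := by
  rcases hx.eq_or_lt with h | h
  · rw [← h, Real.zero_rpow hq.ne', mul_zero]
  · rw [Real.rpow_add_one h.ne']

private lemma key_scalar {p : ℝ} (hp : 2 ≤ p) (a b : ℝ) :
    |a| ^ p + p * (|a| ^ (p - 2) * a * (b - a)) ≤ |b| ^ p := by
  have hp1 : (1:ℝ) < p := by linarith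
  have hp0 : (0:ℝ) < p := by linarith
  -- |a|^(p-2) * (a*a) = |a|^p
  have ha2 : |a| ^ (p - 2) * (a * a) = |a| ^ p := by
    have h1 : a * a = |a| * |a| := (abs_mul_abs_self a).symm
    have h2 : |a| ^ (p - 2) * |a| = |a| ^ (p - 2 + 1) :=
      rpow_succ_aux (abs_nonneg a) (by linarith)
    have h3 : |a| ^ (p - 2 + 1) * |a| = |a| ^ (p - 2 + 1 + 1) :=
      rpow_succ_aux (abs_nonneg a) (by linarith)
    have : p - 2 + 1 + 1 = p := by ring
    rw [h1, ← mul_assoc, h2, h3, this]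
  -- |a|^(p-2) * |a| = |a|^(p-1)
  have ha1 : |a| ^ (p - 2) * |a| = |a| ^ (p - 1) := by
    have h2 : |a| ^ (p - 2) * |a| = |a| ^ (p - 2 + 1) :=
      rpow_succ_aux (abs_nonneg a) (by linarith)
    rw [h2, show p - 2 + 1 = p - 1 by ring]
  have hab : |a| ^ (p - 2) * a * b ≤ |a| ^ (p - 1) * |b| := by
    calc |a| ^ (p - 2) * a * b ≤ |(|a| ^ (p - 2) * a * b)| := le_abs_self _
      _ = |a| ^ (p - 2) * |a| * |b| := by
          rw [abs_mul, abs_mul,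
            abs_of_nonneg (Real.rpow_nonneg (abs_nonneg a) _)]
      _ = |a| ^ (p - 1) * |b| := by rw [ha1]
  have hyoung : |a| ^ (p - 1) * |b| ≤ (p - 1) / p * |a| ^ p + |b| ^ p / p := by
    have hpq : (p / (p - 1)).HolderConjugate p :=
      (Real.HolderConjugate.conjExponent hp1).symm
    have h := Real.young_inequality_of_nonneg
      (Real.rpow_nonneg (abs_nonneg a) (p - 1)) (abs_nonneg b) hpq
    have hxp : (|a| ^ (p - 1)) ^ (p / (p - 1)) = |a| ^ p := by
      rw [← Real.rpow_mul (abs_nonneg a)]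
      congr 1
      rw [mul_comm]
      exact div_mul_cancel₀ p (by linarith : p - (1:ℝ) ≠ 0)
    rw [hxp] at h
    have hd : |a| ^ p / (p / (p - 1)) = (p - 1) / p * |a| ^ p := by
      field_simp
    rw [hd] at h
    linarith [h]
  have hmul : p * (|a| ^ (p - 2) * a * b) ≤ (p - 1) * |a| ^ p + |b| ^ p := by
    have := mul_le_mul_of_nonneg_left (le_trans hab hyoung) hp0.le
    have hr : p * ((p - 1) / p * |a| ^ p + |b| ^ p / p)
        = (p - 1) * |a| ^ p + |b| ^ p := by field_simp
    linarith [hr ▸ this]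
  nlinarith [ha2, hmul]

private lemma absbound_scalar {p : ℝ} (hp : 2 ≤ p) (a c : ℝ) :
    |a| ^ (p - 1) * |c| ≤ |a| ^ p + |c| ^ p := by
  have hp1 : (0:ℝ) < p - 1 := by linarith
  rcases le_total |c| |a| with h | h
  · have h1 : |a| ^ (p - 1) * |c| ≤ |a| ^ (p - 1) * |a| :=
      mul_le_mul_of_nonneg_left h (Real.rpow_nonneg (abs_nonneg a) _)
    have h2 : |a| ^ (p - 1) * |a| = |a| ^ (p - 1 + 1) :=
      rpow_succ_aux (abs_nonneg a) (by linarith)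
    have h3 : p - 1 + 1 = p := by ring
    have h4 : |a| ^ (p - 1) * |c| ≤ |a| ^ p := by
      rw [h3] at h2; rw [h2] at h1; exact h1
    nlinarith [Real.rpow_nonneg (abs_nonneg c) p]
  · have h1 : |a| ^ (p - 1) * |c| ≤ |c| ^ (p - 1) * |c| :=
      mul_le_mul_of_nonneg_right
        (Real.rpow_le_rpow (abs_nonneg a) h hp1.le) (abs_nonneg c)
    have h2 : |c| ^ (p - 1) * |c| = |c| ^ (p - 1 + 1) :=
      rpow_succ_aux (abs_nonneg c) (by linarith)
    have h3 : p - 1 + 1 = p := by ring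
    rw [h3] at h2
    nlinarith [Real.rpow_nonneg (abs_nonneg a) p]

private lemma sumbound_scalar {p : ℝ} (hp : 0 ≤ p) {a b : ℝ} (ha : 0 ≤ a) (hb : 0 ≤ b) :
    (a + b) ^ p ≤ 2 ^ p * (a ^ p + b ^ p) := by
  have hmax : a + b ≤ 2 * max a b := by
    rcases le_total a b with h | h
    · simp [max_eq_right h]; linarith
    · simp [max_eq_left h]; linarith
  calc (a + b) ^ p ≤ (2 * max a b) ^ p :=
        Real.rpow_le_rpow (by linarith) hmax hp
    _ = 2 ^ p * (max a b) ^ p := Real.mul_rpow (by norm_num) (le_max_of_le_left ha)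
    _ ≤ 2 ^ p * (a ^ p + b ^ p) := by
        apply mul_le_mul_of_nonneg_left _ (Real.rpow_nonneg (by norm_num) p)
        rcases le_total a b with h | h
        · rw [max_eq_right h]
          exact le_add_of_nonneg_left (Real.rpow_nonneg ha p)
        · rw [max_eq_left h]
          exact le_add_of_nonneg_right (Real.rpow_nonneg hb p)

private lemma G_key {p : ℝ} (hp : 2 ≤ p) (a b : ℝ) :
    p * (|a| ^ (p - 2) * a * (b - a)) ≤ |b| ^ p - |a| ^ p := by
  linarith [key_scalar hp a b]

private lemma G_abs_bound {p : ℝ} (hp : 2 ≤ p) (a b : ℝ) :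
    |(|a| ^ (p - 2) * a * (b - a))| ≤ (1 + 2 ^ p) * |a| ^ p + 2 ^ p * |b| ^ p := by
  have h1 : |(|a| ^ (p - 2) * a * (b - a))| = |a| ^ (p - 2) * |a| * |b - a| := by
    rw [abs_mul, abs_mul, abs_of_nonneg (Real.rpow_nonneg (abs_nonneg a) _)]
  have ha1 : |a| ^ (p - 2) * |a| = |a| ^ (p - 1) := by
    rw [rpow_succ_aux (abs_nonneg a) (by linarith : (0:ℝ) < p - 2 + 1),
      show p - 2 + 1 = p - 1 by ring]
  have h2 : |a| ^ (p - 1) * |b - a| ≤ |a| ^ p + |b - a| ^ p := absbound_scalar hp a (b - a)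
  have h3 : |b - a| ^ p ≤ (|a| + |b|) ^ p := by
    apply Real.rpow_le_rpow (abs_nonneg _) _ (by linarith)
    calc |b - a| ≤ |b| + |a| := abs_sub b a
      _ = |a| + |b| := by ring
  have h4 : (|a| + |b|) ^ p ≤ 2 ^ p * (|a| ^ p + |b| ^ p) :=
    sumbound_scalar (by linarith) (abs_nonneg a) (abs_nonneg b)
  rw [h1, ha1]
  nlinarith [h2, h3, h4]

private theorem core_ineq {α : Type*} [MeasurableSpace α] (μ : Measure α)
    {p : ℝ} (hp : 2 ≤ p) (f g k : α → ℝ)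
    (hf : Measurable f) (hg : Measurable g) (hk : Measurable k)
    (hknn : ∀ x, 0 ≤ k x)
    (hA : Integrable (fun x => |f x| ^ p / k x) μ)
    (hB : Integrable (fun x => |g x| ^ p / k x) μ) :
    Integrable (fun x => |f x| ^ (p - 2) * f x * (g x - f x) / k x) μ ∧
      p * ∫ x, |f x| ^ (p - 2) * f x * (g x - f x) / k x ∂μ ≤
        (∫ x, |g x| ^ p / k x ∂μ) - ∫ x, |f x| ^ p / k x ∂μ := by
  have hGmeas : Measurable fun x => |f x| ^ (p - 2) * f x * (g x - f x) / k x :=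
    (((hf.abs.pow measurable_const).mul hf).mul (hg.sub hf)).div hk
  have hGint : Integrable (fun x => |f x| ^ (p - 2) * f x * (g x - f x) / k x) μ := by
    apply Integrable.mono' ((hA.const_mul (1 + 2 ^ p)).add (hB.const_mul (2 ^ p)))
      hGmeas.aestronglyMeasurable
    filter_upwards with x
    simp only [Pi.add_apply]
    rw [Real.norm_eq_abs, abs_div, abs_of_nonneg (hknn x)]
    rcases (hknn x).eq_or_lt with h | h
    · rw [← h]
      simp
    · have hre : (1 + 2 ^ p) * (|f x| ^ p / k x) + 2 ^ p * (|g x| ^ p / k x)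
          = ((1 + 2 ^ p) * |f x| ^ p + 2 ^ p * |g x| ^ p) / k x := by
        field_simp
      rw [hre]
      exact (div_le_div_iff_of_pos_right h).2 (G_abs_bound hp (f x) (g x))
  refine ⟨hGint, ?_⟩
  have hconv : (fun x => p * (|f x| ^ (p - 2) * f x * (g x - f x) / k x)) ≤
      fun x => |g x| ^ p / k x - |f x| ^ p / k x := by
    intro x
    rcases (hknn x).eq_or_lt with h | h
    · show p * (_ / k x) ≤ _ / k x - _ / k x
      rw [← h]
      simp [div_zero]
    · show p * (_ / k x) ≤ _ / k x - _ / k x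
      rw [div_sub_div_same,
        show p * (|f x| ^ (p - 2) * f x * (g x - f x) / k x)
          = p * (|f x| ^ (p - 2) * f x * (g x - f x)) / k x by ring]
      exact (div_le_div_iff_of_pos_right h).2 (G_key hp (f x) (g x))
  have h2 := integral_mono (hGint.const_mul p) (hB.sub hA) hconv
  simp only [Pi.sub_apply] at h2
  rw [integral_const_mul, integral_sub hB hA] at h2
  exact h2

/-- Subgradient inequality for the fractional `p`-Dirichlet energy `Φ`:
if `Φ(u), Φ(v) < ∞`, then the fractional `p`-Laplace pairing of `u` against `v - u`
is absolutely convergent and `Φ(v) - Φ(u) ≥ (C_{N,p,s}/2) ∬ |u(x)-u(y)|^{p-2}(u(x)-u(y))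
((v-u)(x)-(v-u)(y))/|x-y|^{N+sp} dx dy`. -/
theorem fractional_p_energy_subgradient (N : ℕ) (hN : 1 ≤ N) (s p : ℝ)
    (hs : 0 < s) (hs1 : s < 1) (hp : 2 ≤ p)
    (C : ℝ) (hC : C = s * 2 ^ (2 * s) * Real.Gamma ((p * s + p + (N : ℝ) - 2) / 2) /
      (Real.pi ^ ((N : ℝ) / 2) * Real.Gamma (1 - s)))
    (Φ : (EuclideanSpace ℝ (Fin N) → ℝ) → ℝ≥0∞)
    (hΦ : ∀ w, Φ w = ENNReal.ofReal (C / (2 * p)) * gagliardoEnergy N s p w)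
    (u v : EuclideanSpace ℝ (Fin N) → ℝ) (hu : Measurable u) (hv : Measurable v)
    (hΦu : Φ u < ⊤) (hΦv : Φ v < ⊤) :
    Integrable (fun z : EuclideanSpace ℝ (Fin N) × EuclideanSpace ℝ (Fin N) =>
        |u z.1 - u z.2| ^ (p - 2) * (u z.1 - u z.2) *
          ((v z.1 - u z.1) - (v z.2 - u z.2)) / ‖z.1 - z.2‖ ^ ((N : ℝ) + s * p)) ∧
      C / 2 * ∫ z : EuclideanSpace ℝ (Fin N) × EuclideanSpace ℝ (Fin N),
          |u z.1 - u z.2| ^ (p - 2) * (u z.1 - u z.2) *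
            ((v z.1 - u z.1) - (v z.2 - u z.2)) / ‖z.1 - z.2‖ ^ ((N : ℝ) + s * p) ≤
        (Φ v).toReal - (Φ u).toReal := by
  have hp0 : (0:ℝ) < p := by linarith
  -- positivity of the constant
  have hC0 : 0 < C := by
    rw [hC]
    have hN1 : (1:ℝ) ≤ (N:ℝ) := by exact_mod_cast hN
    have h1 : 0 < Real.Gamma ((p * s + p + (N : ℝ) - 2) / 2) :=
      Real.Gamma_pos_of_pos (by nlinarith)
    have h2 : 0 < Real.Gamma (1 - s) := Real.Gamma_pos_of_pos (by linarith)
    have h3 : (0:ℝ) < Real.pi ^ ((N:ℝ)/2) := Real.rpow_pos_of_pos Real.pi_pos _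
    have h4 : (0:ℝ) < 2 ^ (2*s) := Real.rpow_pos_of_pos two_pos _
    exact div_pos (mul_pos (mul_pos hs h4) h1) (mul_pos h3 h2)
  have hc2p : (0:ℝ) < C / (2 * p) := by positivity
  -- measurable pieces
  have hmf : Measurable fun z : EuclideanSpace ℝ (Fin N) × EuclideanSpace ℝ (Fin N) =>
      u z.1 - u z.2 := (hu.comp measurable_fst).sub (hu.comp measurable_snd)
  have hmg : Measurable fun z : EuclideanSpace ℝ (Fin N) × EuclideanSpace ℝ (Fin N) =>
      v z.1 - v z.2 := (hv.comp measurable_fst).sub (hv.comp measurable_snd)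
  have hmk : Measurable fun z : EuclideanSpace ℝ (Fin N) × EuclideanSpace ℝ (Fin N) =>
      ‖z.1 - z.2‖ ^ ((N : ℝ) + s * p) :=
    ((measurable_fst.sub measurable_snd).norm).pow measurable_const
  have hknn : ∀ z : EuclideanSpace ℝ (Fin N) × EuclideanSpace ℝ (Fin N),
      (0:ℝ) ≤ ‖z.1 - z.2‖ ^ ((N : ℝ) + s * p) :=
    fun z => Real.rpow_nonneg (norm_nonneg _) _
  -- finiteness of the energies
  have hcne : (ENNReal.ofReal (C / (2 * p))) ≠ 0 := (ENNReal.ofReal_pos.2 hc2p).ne'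
  have hEu : gagliardoEnergy N s p u ≠ ⊤ := by
    intro h
    rw [hΦ u, h, ENNReal.mul_top hcne] at hΦu
    exact absurd hΦu (lt_irrefl _)
  have hEv : gagliardoEnergy N s p v ≠ ⊤ := by
    intro h
    rw [hΦ v, h, ENNReal.mul_top hcne] at hΦv
    exact absurd hΦv (lt_irrefl _)
  -- integrability of the two energy densities
  have hAnn : ∀ z : EuclideanSpace ℝ (Fin N) × EuclideanSpace ℝ (Fin N),
      (0:ℝ) ≤ |u z.1 - u z.2| ^ p / ‖z.1 - z.2‖ ^ ((N : ℝ) + s * p) :=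
    fun z => div_nonneg (Real.rpow_nonneg (abs_nonneg _) _) (hknn z)
  have hBnn : ∀ z : EuclideanSpace ℝ (Fin N) × EuclideanSpace ℝ (Fin N),
      (0:ℝ) ≤ |v z.1 - v z.2| ^ p / ‖z.1 - z.2‖ ^ ((N : ℝ) + s * p) :=
    fun z => div_nonneg (Real.rpow_nonneg (abs_nonneg _) _) (hknn z)
  have hAmeas : Measurable fun z : EuclideanSpace ℝ (Fin N) × EuclideanSpace ℝ (Fin N) =>
      |u z.1 - u z.2| ^ p / ‖z.1 - z.2‖ ^ ((N : ℝ) + s * p) :=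
    (hmf.abs.pow measurable_const).div hmk
  have hBmeas : Measurable fun z : EuclideanSpace ℝ (Fin N) × EuclideanSpace ℝ (Fin N) =>
      |v z.1 - v z.2| ^ p / ‖z.1 - z.2‖ ^ ((N : ℝ) + s * p) :=
    (hmg.abs.pow measurable_const).div hmk
  have hAint : Integrable (fun z : EuclideanSpace ℝ (Fin N) × EuclideanSpace ℝ (Fin N) =>
      |u z.1 - u z.2| ^ p / ‖z.1 - z.2‖ ^ ((N : ℝ) + s * p)) := by
    refine ⟨hAmeas.aestronglyMeasurable, ?_⟩
    rw [hasFiniteIntegral_iff_ofReal (ae_of_all _ hAnn)]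
    exact hEu.lt_top
  have hBint : Integrable (fun z : EuclideanSpace ℝ (Fin N) × EuclideanSpace ℝ (Fin N) =>
      |v z.1 - v z.2| ^ p / ‖z.1 - z.2‖ ^ ((N : ℝ) + s * p)) := by
    refine ⟨hBmeas.aestronglyMeasurable, ?_⟩
    rw [hasFiniteIntegral_iff_ofReal (ae_of_all _ hBnn)]
    exact hEv.lt_top
  -- values of the energies
  have hAval : (gagliardoEnergy N s p u).toReal =
      ∫ z : EuclideanSpace ℝ (Fin N) × EuclideanSpace ℝ (Fin N),
        |u z.1 - u z.2| ^ p / ‖z.1 - z.2‖ ^ ((N : ℝ) + s * p) := by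
    rw [integral_eq_lintegral_of_nonneg_ae (ae_of_all _ hAnn) hAmeas.aestronglyMeasurable]
    rfl
  have hBval : (gagliardoEnergy N s p v).toReal =
      ∫ z : EuclideanSpace ℝ (Fin N) × EuclideanSpace ℝ (Fin N),
        |v z.1 - v z.2| ^ p / ‖z.1 - z.2‖ ^ ((N : ℝ) + s * p) := by
    rw [integral_eq_lintegral_of_nonneg_ae (ae_of_all _ hBnn) hBmeas.aestronglyMeasurable]
    rfl
  -- apply the core inequality
  obtain ⟨hGint, hineq⟩ := core_ineq (volume) hp
    (fun z : EuclideanSpace ℝ (Fin N) × EuclideanSpace ℝ (Fin N) => u z.1 - u z.2)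
    (fun z => v z.1 - v z.2)
    (fun z => ‖z.1 - z.2‖ ^ ((N : ℝ) + s * p))
    hmf hmg hmk hknn hAint hBint
  have heq : (fun z : EuclideanSpace ℝ (Fin N) × EuclideanSpace ℝ (Fin N) =>
        |u z.1 - u z.2| ^ (p - 2) * (u z.1 - u z.2) *
          ((v z.1 - u z.1) - (v z.2 - u z.2)) / ‖z.1 - z.2‖ ^ ((N : ℝ) + s * p))
      = fun z : EuclideanSpace ℝ (Fin N) × EuclideanSpace ℝ (Fin N) =>
        |u z.1 - u z.2| ^ (p - 2) * (u z.1 - u z.2) *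
          ((v z.1 - v z.2) - (u z.1 - u z.2)) / ‖z.1 - z.2‖ ^ ((N : ℝ) + s * p) := by
    funext z
    ring
  rw [heq]
  refine ⟨hGint, ?_⟩
  rw [hΦ v, hΦ u, ENNReal.toReal_mul, ENNReal.toReal_mul,
    ENNReal.toReal_ofReal hc2p.le, hAval, hBval]
  set IG := ∫ z : EuclideanSpace ℝ (Fin N) × EuclideanSpace ℝ (Fin N),
      |u z.1 - u z.2| ^ (p - 2) * (u z.1 - u z.2) *
        ((v z.1 - v z.2) - (u z.1 - u z.2)) / ‖z.1 - z.2‖ ^ ((N : ℝ) + s * p) with hIG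
  set IA := ∫ z : EuclideanSpace ℝ (Fin N) × EuclideanSpace ℝ (Fin N),
      |u z.1 - u z.2| ^ p / ‖z.1 - z.2‖ ^ ((N : ℝ) + s * p) with hIA
  set IB := ∫ z : EuclideanSpace ℝ (Fin N) × EuclideanSpace ℝ (Fin N),
      |v z.1 - v z.2| ^ p / ‖z.1 - z.2‖ ^ ((N : ℝ) + s * p) with hIB
  have hkey : p * IG ≤ IB - IA := hineq
  have hstep : C / (2 * p) * (p * IG) ≤ C / (2 * p) * (IB - IA) :=
    mul_le_mul_of_nonneg_left hkey hc2p.le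
  have hL : C / 2 * IG = C / (2 * p) * (p * IG) := by
    field_simp
  have hR : C / (2 * p) * (IB - IA) = C / (2 * p) * IB - C / (2 * p) * IA := by ring
  linarith [hL ▸ (hR ▸ hstep)]
end

section
/- Let p, q, C be real numbers with 2 ≤ p < q and C > 0, and set α := C^{−q/(q−p)}, E₀ := (1/p − 1/q)·C^{−pq/(q−p)}, and h(x) := x^p/p − C^q x^q/q for x ≥ 0. Let T ∈ (0, ∞] and let x, y : [0, T) → ℝ be continuous functions with x(t) ≥ 0, y(t) ≥ 0 and y(t) ≤ C·x(t) for all t ∈ [0, T). Define E(t) := x(t)^p/p − y(t)^q/q and assume that E(t) ≤ E(0) for all t ∈ [0, T), that E(0) < E₀, and that x(0) > α. Then there exists β > α with h(β) = E(0) such that for all t ∈ [0, T) one has x(t) ≥ β and y(t) ≥ C·β. -/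
open scoped ENNReal

/-- Abstract Step 1 of the blow-up proof (Theorem 2.7): with
`α = C^{-q/(q-p)}`, `E₀ = (1/p - 1/q) C^{-pq/(q-p)}` and
`h(x) = x^p/p - C^q x^q/q`, suppose `x, y` are continuous nonnegative functions on
`[0, T)` (`T ∈ (0, ∞]`) with `y ≤ C x`, the energy `E(t) = x(t)^p/p - y(t)^q/q`
satisfies `E(t) ≤ E(0)`, `E(0) < E₀` and `x(0) > α`. Then there is `β > α` with
`h(β) = E(0)` such that `x(t) ≥ β` and `y(t) ≥ Cβ` for all `t ∈ [0, T)`. -/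
theorem blowup_step_one (p q C : ℝ) (hp : 2 ≤ p) (hpq : p < q) (hC : 0 < C)
    (α E₀ : ℝ) (hα : α = C ^ (-(q / (q - p))))
    (hE₀ : E₀ = (1 / p - 1 / q) * C ^ (-(p * q / (q - p))))
    (h : ℝ → ℝ) (hh : ∀ x, h x = x ^ p / p - C ^ q * x ^ q / q)
    (T : ℝ≥0∞) (hT : 0 < T)
    (D : Set ℝ) (hD : D = {t : ℝ | 0 ≤ t ∧ ENNReal.ofReal t < T})
    (x y : ℝ → ℝ) (hx : ContinuousOn x D) (hy : ContinuousOn y D)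
    (hx0 : ∀ t ∈ D, 0 ≤ x t) (hy0 : ∀ t ∈ D, 0 ≤ y t)
    (hxy : ∀ t ∈ D, y t ≤ C * x t)
    (E : ℝ → ℝ) (hE : ∀ t, E t = x t ^ p / p - y t ^ q / q)
    (hEdec : ∀ t ∈ D, E t ≤ E 0) (hE0 : E 0 < E₀) (hx0α : α < x 0) :
    ∃ β : ℝ, α < β ∧ h β = E 0 ∧ ∀ t ∈ D, β ≤ x t ∧ C * β ≤ y t := by
  have hp0 : (0 : ℝ) < p := lt_of_lt_of_le (by norm_num) hp
  have hq0 : (0 : ℝ) < q := hp0.trans hpq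
  have hd : (0 : ℝ) < q - p := sub_pos.2 hpq
  have hα0 : 0 < α := hα ▸ Real.rpow_pos_of_pos hC _
  have hne : q - p ≠ 0 := hd.ne'
  -- key identity : C^q * α^(q-p) = 1
  have hkey : C ^ q * α ^ (q - p) = 1 := by
    rw [hα, ← Real.rpow_mul hC.le, ← Real.rpow_add hC]
    have : q + -(q / (q - p)) * (q - p) = 0 := by field_simp; ring
    rw [this, Real.rpow_zero]
  -- h α = E₀
  have hαE : h α = E₀ := by
    have h1 : α ^ q = α ^ p * α ^ (q - p) := by
      have he : q = p + (q - p) := by ring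
      nth_rewrite 1 [he]
      exact Real.rpow_add hα0 _ _
    have h2 : α ^ p = C ^ (-(p * q / (q - p))) := by
      have he : -(q / (q - p)) * p = -(p * q / (q - p)) := by rw [neg_mul, div_mul_eq_mul_div, mul_comm q p]
      rw [hα, ← Real.rpow_mul hC.le, he]
    have h3 : C ^ q * α ^ q = α ^ p := by
      rw [h1]; calc C ^ q * (α ^ p * α ^ (q - p)) = α ^ p * (C ^ q * α ^ (q - p)) := by ring
        _ = α ^ p := by rw [hkey, mul_one]
    rw [hh, h3, hE₀, ← h2]; field_simp
  -- h ≤ E on D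
  have hhle : ∀ t ∈ D, h (x t) ≤ E t := by
    intro t ht
    have h1 : y t ^ q ≤ (C * x t) ^ q :=
      Real.rpow_le_rpow (hy0 t ht) (hxy t ht) hq0.le
    have h2 : (C * x t) ^ q = C ^ q * x t ^ q := Real.mul_rpow hC.le (hx0 t ht)
    rw [hh, hE]
    have h' : y t ^ q ≤ C ^ q * x t ^ q := h2 ▸ h1
    have h'' : y t ^ q / q ≤ C ^ q * x t ^ q / q := by gcongr
    linarith
  -- continuity of h on Ici α
  have hhc : ContinuousOn h (Set.Ici α) := by
    intro z hz
    have hz0 : z ≠ 0 := (hα0.trans_le hz).ne'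
    have c1 : ContinuousAt (fun w : ℝ => w ^ p) z :=
      Real.continuousAt_rpow_const z p (Or.inl hz0)
    have c2 : ContinuousAt (fun w : ℝ => w ^ q) z :=
      Real.continuousAt_rpow_const z q (Or.inl hz0)
    have : ContinuousAt h z := by
      have : ContinuousAt (fun w : ℝ => w ^ p / p - C ^ q * w ^ q / q) z :=
        ((c1.div_const p).sub ((c2.const_mul _).div_const q))
      exact this.congr (by filter_upwards with w using (hh w).symm)
    exact this.continuousWithinAt
  -- strict antitonicity of h on Ici α
  have hanti : StrictAntiOn h (Set.Ici α) := by
    apply strictAntiOn_of_deriv_neg (convex_Ici α) hhc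
    intro z hz
    rw [interior_Ici] at hz
    have hz0 : 0 < z := hα0.trans hz
    have d1 : HasDerivAt (fun w : ℝ => w ^ p) (p * z ^ (p - 1)) z :=
      Real.hasDerivAt_rpow_const (Or.inl hz0.ne')
    have d2 : HasDerivAt (fun w : ℝ => w ^ q) (q * z ^ (q - 1)) z :=
      Real.hasDerivAt_rpow_const (Or.inl hz0.ne')
    have dh : HasDerivAt h (z ^ (p - 1) - C ^ q * z ^ (q - 1)) z := by
      have : HasDerivAt (fun w : ℝ => w ^ p / p - C ^ q * w ^ q / q)
          (p * z ^ (p - 1) / p - C ^ q * (q * z ^ (q - 1)) / q) z :=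
        (d1.div_const p).sub ((d2.const_mul _).div_const q)
      have heq : p * z ^ (p - 1) / p - C ^ q * (q * z ^ (q - 1)) / q
          = z ^ (p - 1) - C ^ q * z ^ (q - 1) := by field_simp
      rw [heq] at this
      exact this.congr_of_eventuallyEq (by filter_upwards with w using hh w)
    rw [dh.deriv]
    have hzq : z ^ (q - 1) = z ^ (p - 1) * z ^ (q - p) := by
      have he : q - 1 = (p - 1) + (q - p) := by ring
      nth_rewrite 1 [he]
      exact Real.rpow_add hz0 _ _
    have h1 : α ^ (q - p) < z ^ (q - p) := Real.rpow_lt_rpow hα0.le hz hd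
    have h2 : 1 < C ^ q * z ^ (q - p) := by
      rw [← hkey]
      exact mul_lt_mul_of_pos_left h1 (Real.rpow_pos_of_pos hC q)
    have hzp : 0 < z ^ (p - 1) := Real.rpow_pos_of_pos hz0 _
    rw [hzq]
    nlinarith
  -- 0 ∈ D
  have h0D : (0 : ℝ) ∈ D := by rw [hD]; exact ⟨le_refl 0, by simpa using hT⟩
  -- find β by IVT on [α, x 0]
  have hhx0 : h (x 0) ≤ E 0 := hhle 0 h0D
  have hmem : E 0 ∈ Set.Icc (h (x 0)) (h α) := ⟨hhx0, by rw [hαE]; exact hE0.le⟩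
  obtain ⟨β, hβmem, hβE⟩ :=
    intermediate_value_Icc' hx0α.le (hhc.mono (Set.Icc_subset_Ici_self)) hmem
  have hβα : α < β := by
    rcases lt_or_eq_of_le hβmem.1 with h' | h'
    · exact h'
    · exfalso; rw [← h', hαE] at hβE; exact absurd hβE.symm hE0.ne
  have hβ0 : 0 < β := hα0.trans hβα
  -- no point of D has x value in (α, β)
  have hnotIoo : ∀ s ∈ D, x s ∉ Set.Ioo α β := by
    intro s hs hcon
    have h1 : h β < h (x s) := hanti (Set.mem_Ici.2 hcon.1.le) (Set.mem_Ici.2 hβα.le) hcon.2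
    have h2 : h (x s) ≤ E s := hhle s hs
    have h3 : E s ≤ E 0 := hEdec s hs
    rw [hβE] at h1; linarith
  -- main bound on x
  have hxβ : ∀ t ∈ D, β ≤ x t := by
    intro t ht
    by_contra hcon
    push_neg at hcon
    have htα : x t ≤ α := by
      by_contra h'
      push_neg at h'
      exact hnotIoo t ht ⟨h', hcon⟩
    have ht0 : 0 ≤ t := by rw [hD] at ht; exact ht.1
    have hsub : Set.Icc (0 : ℝ) t ⊆ D := by
      intro s hs
      rw [hD] at ht ⊢
      exact ⟨hs.1, lt_of_le_of_lt (ENNReal.ofReal_le_ofReal hs.2) ht.2⟩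
    have hmid : (α + β) / 2 ∈ Set.Icc (x t) (x 0) :=
      ⟨by linarith, by linarith [hβmem.2]⟩
    obtain ⟨s, hs, hsx⟩ := intermediate_value_Icc' ht0 (hx.mono hsub) hmid
    exact hnotIoo s (hsub hs) (hsx ▸ ⟨by linarith, by linarith⟩)
  refine ⟨β, hβα, hβE, fun t ht => ⟨hxβ t ht, ?_⟩⟩
  -- y bound
  by_contra hcon
  push_neg at hcon
  have h1 : β ^ p ≤ x t ^ p := Real.rpow_le_rpow hβ0.le (hxβ t ht) hp0.le
  have h2 : y t ^ q < (C * β) ^ q :=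
    Real.rpow_lt_rpow (hy0 t ht) hcon hq0
  have h3 : (C * β) ^ q = C ^ q * β ^ q := Real.mul_rpow hC.le hβ0.le
  have h4 : β ^ p / p ≤ x t ^ p / p := by gcongr
  have h5 : y t ^ q / q < C ^ q * β ^ q / q := by rw [← h3]; gcongr
  have h6 : E t ≤ E 0 := hEdec t ht
  rw [hE] at h6
  have h7 := hh β
  linarith [h5, h4, h6, h7, hβE]
end

section
/- Let N ≥ 1 be an integer, s ∈ (0,1), and let p, q, r ∈ [2, ∞) be real numbers with p < q, r < q, sp < N and r > N(q−p)/(sp). Let Ω ⊂ ℝ^N be a bounded open set, set p* := Np/(N−sp), C_{N,p,s} := s·2^{2s}·Γ((ps+p+N−2)/2)/(π^{N/2}·Γ(1−s)), and α := (1/r − 1/q)/(1/r − (N−sp)/(Np)). Assume there exists a constant C_* > 0 such that for every measurable w : ℝ^N → ℝ vanishing almost everywhere outside Ω, (∫_Ω |w|^{p*} dx)^{1/p*} ≤ C_* · ( (C_{N,p,s}/2) ∬_{ℝ^N×ℝ^N} |w(x)−w(y)|^p/|x−y|^{N+sp} dx dy )^{1/p}. Then there is a constant C > 0, depending only on C_*,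 N, p, q, r, s, such that for every measurable u : ℝ^N → ℝ vanishing almost everywhere outside Ω with ∫_Ω |u|^r dx < ∞ and with finite Gagliardo p-energy, (1/q)∫_Ω |u|^q dx ≤ C · Φ(u)^{αq/p} · ( (1/r)∫_Ω |u|^r dx )^{(1−α)q/r}, where Φ(u) := (C_{N,p,s}/(2p)) ∬_{ℝ^N×ℝ^N} |u(x)−u(y)|^p/|x−y|^{N+sp} dx dy. -/
open MeasureTheory
open scoped ENNReal

set_option maxHeartbeats 2000000 in
/-- Key interpolation estimate of Lemma 3.3 (case `r < q`): assuming the fractional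
Sobolev embedding `‖w‖_{L^{p*}(Ω)} ≤ C_* ‖w‖_{W_0^{s,p}(Ω)}` for functions vanishing
outside the bounded open set `Ω`, there is `C > 0` such that for every `u` vanishing
outside `Ω` with `∫_Ω |u|^r < ∞` and finite Gagliardo `p`-energy,
`(1/q)∫_Ω |u|^q ≤ C Φ(u)^{αq/p} ((1/r)∫_Ω |u|^r)^{(1-α)q/r}`, where
`Φ(u) = (C_{N,p,s}/(2p)) ∬ |u(x)-u(y)|^p/|x-y|^{N+sp}` and
`α = (1/r - 1/q)/(1/r - (N-sp)/(Np))`. -/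
theorem lemma33_interpolation (N : ℕ) (hN : 1 ≤ N) (s p q r : ℝ)
    (hs : 0 < s) (hs1 : s < 1) (hp : 2 ≤ p) (hq : 2 ≤ q) (hr : 2 ≤ r)
    (hpq : p < q) (hrq : r < q) (hsp : s * p < N)
    (hlow : r > (N : ℝ) * (q - p) / (s * p))
    (Ω : Set (EuclideanSpace ℝ (Fin N))) (hΩo : IsOpen Ω)
    (hΩb : Bornology.IsBounded Ω)
    (pstar CNps α : ℝ)
    (hpstar : pstar = (N : ℝ) * p / ((N : ℝ) - s * p))
    (hCNps : CNps = s * 2 ^ (2 * s) * Real.Gamma ((p * s + p + (N : ℝ) - 2) / 2) /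
      (Real.pi ^ ((N : ℝ) / 2) * Real.Gamma (1 - s)))
    (hα : α = (1 / r - 1 / q) / (1 / r - ((N : ℝ) - s * p) / ((N : ℝ) * p)))
    (Cstar : ℝ) (hCstar : 0 < Cstar)
    (hSob : ∀ w : EuclideanSpace ℝ (Fin N) → ℝ, Measurable w →
      (∀ᵐ x ∂(volume : Measure (EuclideanSpace ℝ (Fin N))), x ∉ Ω → w x = 0) →
      (∫⁻ x in Ω, ENNReal.ofReal (|w x| ^ pstar)) ^ (1 / pstar) ≤
        ENNReal.ofReal Cstar *
          (ENNReal.ofReal (CNps / 2) * gagliardoEnergy N s p w) ^ (1 / p)) :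
    ∃ C : ℝ, 0 < C ∧ ∀ u : EuclideanSpace ℝ (Fin N) → ℝ, Measurable u →
      (∀ᵐ x ∂(volume : Measure (EuclideanSpace ℝ (Fin N))), x ∉ Ω → u x = 0) →
      (∫⁻ x in Ω, ENNReal.ofReal (|u x| ^ r)) < ⊤ →
      gagliardoEnergy N s p u < ⊤ →
      ENNReal.ofReal (1 / q) * ∫⁻ x in Ω, ENNReal.ofReal (|u x| ^ q) ≤
        ENNReal.ofReal C *
          (ENNReal.ofReal (CNps / (2 * p)) * gagliardoEnergy N s p u) ^ (α * q / p) *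
          (ENNReal.ofReal (1 / r) *
            ∫⁻ x in Ω, ENNReal.ofReal (|u x| ^ r)) ^ ((1 - α) * q / r) := by
  -- basic positivity
  have hp0 : (0:ℝ) < p := by linarith
  have hq0 : (0:ℝ) < q := by linarith
  have hr0 : (0:ℝ) < r := by linarith
  have hN0 : (0:ℝ) < N := by exact_mod_cast Nat.lt_of_lt_of_le Nat.zero_lt_one hN
  have hNsp : (0:ℝ) < (N:ℝ) - s * p := by linarith
  have hps0 : 0 < pstar := by rw [hpstar]; positivity
  -- `q < pstar`
  have hqps : q < pstar := by
    rw [hpstar, lt_div_iff₀ hNsp]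
    have h2 : (N:ℝ) * (q - p) < q * (s * p) := by
      have h := lt_trans hlow hrq
      rw [div_lt_iff₀ (by positivity)] at h
      linarith
    nlinarith
  have hα' : α = (1 / r - 1 / q) / (1 / r - 1 / pstar) := by
    rw [hα, hpstar, one_div_div]
  have hrps : r < pstar := lt_trans hrq hqps
  have hD : 0 < 1 / r - 1 / pstar := by
    have := one_div_lt_one_div_of_lt hr0 hrps
    linarith
  have hNum : 0 < 1 / r - 1 / q := by
    have := one_div_lt_one_div_of_lt hr0 hrq
    linarith
  have hα0 : 0 < α := by rw [hα']; exact div_pos hNum hD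
  have hα1 : α < 1 := by
    rw [hα', div_lt_one hD]
    have := one_div_lt_one_div_of_lt hq0 hqps
    linarith
  -- key interpolation identity : α/pstar + (1-α)/r = 1/q
  have hmul : α * (1 / r - 1 / pstar) = 1 / r - 1 / q := by
    rw [hα', div_mul_cancel₀ _ (ne_of_gt hD)]
  have hkey : α * (1 / pstar) + (1 - α) * (1 / r) = 1 / q := by
    linear_combination -hmul
  have hαq0 : 0 < α * q := mul_pos hα0 hq0
  have hαq0' : 0 < (1 - α) * q := mul_pos (by linarith) hq0
  have hαqps : α * q < pstar := by
    have h1 : α * (1 / pstar) < 1 / q := by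
      nlinarith [mul_pos (show (0:ℝ) < 1 - α by linarith) (one_div_pos.mpr hr0)]
    have h2 : α * (1 / pstar) * (pstar * q) < 1 / q * (pstar * q) :=
      mul_lt_mul_of_pos_right h1 (by positivity)
    have e1 : α * (1 / pstar) * (pstar * q) = α * q := by
      field_simp
    have e2 : 1 / q * (pstar * q) = pstar := by
      field_simp
    rw [e1, e2] at h2; exact h2
  -- conjugate exponents for Hölder
  set P : ℝ := pstar / (α * q) with hP
  set Q : ℝ := r / ((1 - α) * q) with hQ
  have hPQ : P.HolderConjugate Q := by
    rw [Real.holderConjugate_iff]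
    constructor
    · rw [hP, lt_div_iff₀ hαq0, one_mul]; exact hαqps
    · rw [hP, hQ, ← one_div, ← one_div, one_div_div, one_div_div]
      have : α * q / pstar = (α * (1 / pstar)) * q := by field_simp
      rw [this]
      have : (1 - α) * q / r = ((1 - α) * (1 / r)) * q := by field_simp
      rw [this]
      have hq' : (1/q) * q = 1 := by field_simp
      linear_combination q * hkey + hq'
  have hP0 : (0:ℝ) < P := div_pos hps0 hαq0
  have hQ0 : (0:ℝ) < Q := div_pos hr0 hαq0'
  refine ⟨(1/q) * Cstar ^ (α*q) * p ^ (α*q/p) * r ^ ((1-α)*q/r), by positivity, ?_⟩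
  intro u hu hu0 hDfin hGfin
  set A := ∫⁻ x in Ω, ENNReal.ofReal (|u x| ^ q) with hA
  set B := ∫⁻ x in Ω, ENNReal.ofReal (|u x| ^ pstar) with hB
  set D := ∫⁻ x in Ω, ENNReal.ofReal (|u x| ^ r) with hD2
  set G := gagliardoEnergy N s p u with hG
  -- Hölder
  have hf : AEMeasurable (fun x => ENNReal.ofReal (|u x| ^ (α * q)))
      (volume.restrict Ω) :=
    ((hu.abs.pow measurable_const).ennreal_ofReal).aemeasurable
  have hg : AEMeasurable (fun x => ENNReal.ofReal (|u x| ^ ((1 - α) * q)))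
      (volume.restrict Ω) :=
    ((hu.abs.pow measurable_const).ennreal_ofReal).aemeasurable
  have hold := ENNReal.lintegral_mul_le_Lp_mul_Lq (volume.restrict Ω) hPQ hf hg
  have hmulfg : (fun x => ENNReal.ofReal (|u x| ^ (α * q)) *
      ENNReal.ofReal (|u x| ^ ((1 - α) * q))) = fun x => ENNReal.ofReal (|u x| ^ q) := by
    funext x
    rw [← ENNReal.ofReal_mul (by positivity), ← Real.rpow_add' (abs_nonneg _)
      (by intro h; nlinarith)]
    congr 1; congr 1; ring
  have hfP : (fun x => ENNReal.ofReal (|u x| ^ (α * q)) ^ P) =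
      fun x => ENNReal.ofReal (|u x| ^ pstar) := by
    funext x
    rw [ENNReal.ofReal_rpow_of_nonneg (by positivity) hP0.le,
      ← Real.rpow_mul (abs_nonneg _)]
    congr 1
    rw [hP]; field_simp
  have hgQ : (fun x => ENNReal.ofReal (|u x| ^ ((1 - α) * q)) ^ Q) =
      fun x => ENNReal.ofReal (|u x| ^ r) := by
    funext x
    rw [ENNReal.ofReal_rpow_of_nonneg (by positivity) hQ0.le,
      ← Real.rpow_mul (abs_nonneg _)]
    congr 1
    rw [hQ]; field_simp
    congr 1; field_simp [sub_ne_zero.mpr (ne_of_gt hα1)]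
  -- rewrite Hölder into the desired form
  have eP : (1:ℝ)/P = α * q / pstar := by rw [hP, one_div_div]
  have eQ : (1:ℝ)/Q = (1 - α) * q / r := by rw [hQ, one_div_div]
  have hhold : A ≤ B ^ (α * q / pstar) * D ^ ((1 - α) * q / r) := by
    have e1 : (∫⁻ x in Ω, (fun x => ENNReal.ofReal (|u x| ^ (α * q))) x *
        (fun x => ENNReal.ofReal (|u x| ^ ((1 - α) * q))) x) = A := by
      rw [hA]; exact lintegral_congr fun x => congrFun hmulfg x
    have e2 : (∫⁻ x in Ω, (fun x => ENNReal.ofReal (|u x| ^ (α * q))) x ^ P) = B := by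
      rw [hB]; exact lintegral_congr fun x => congrFun hfP x
    have e3 : (∫⁻ x in Ω, (fun x => ENNReal.ofReal (|u x| ^ ((1 - α) * q))) x ^ Q) = D := by
      rw [hD2]; exact lintegral_congr fun x => congrFun hgQ x
    calc A = ∫⁻ x in Ω, (fun x => ENNReal.ofReal (|u x| ^ (α * q))) x *
          (fun x => ENNReal.ofReal (|u x| ^ ((1 - α) * q))) x := e1.symm
      _ ≤ (∫⁻ x in Ω, (fun x => ENNReal.ofReal (|u x| ^ (α * q))) x ^ P) ^ ((1:ℝ)/P) *
          (∫⁻ x in Ω, (fun x => ENNReal.ofReal (|u x| ^ ((1 - α) * q))) x ^ Q) ^ ((1:ℝ)/Q) := hold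
      _ = B ^ (α * q / pstar) * D ^ ((1 - α) * q / r) := by rw [e2, e3, eP, eQ]
  -- Sobolev step raised to power αq
  have hSob' := hSob u hu hu0
  set Y := ENNReal.ofReal (CNps / (2 * p)) * G with hY
  have hsplit : ENNReal.ofReal (CNps / 2) = ENNReal.ofReal p * ENNReal.ofReal (CNps / (2 * p)) := by
    rw [← ENNReal.ofReal_mul hp0.le]
    congr 1
    field_simp
  have he1 : (0:ℝ) ≤ α * q / p := by positivity
  have hBle : B ^ (α * q / pstar) ≤ ENNReal.ofReal Cstar ^ (α * q) *
      (ENNReal.ofReal p ^ (α * q / p) * Y ^ (α * q / p)) := by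
    have h1 : B ^ (α * q / pstar) = (B ^ ((1:ℝ) / pstar)) ^ (α * q) := by
      rw [← ENNReal.rpow_mul]; congr 1; ring
    rw [h1]
    calc (B ^ ((1:ℝ) / pstar)) ^ (α * q)
        ≤ (ENNReal.ofReal Cstar * (ENNReal.ofReal (CNps / 2) * G) ^ ((1:ℝ) / p)) ^ (α * q) :=
          ENNReal.rpow_le_rpow hSob' hαq0.le
      _ = ENNReal.ofReal Cstar ^ (α * q) *
          ((ENNReal.ofReal (CNps / 2) * G) ^ ((1:ℝ) / p)) ^ (α * q) :=
          ENNReal.mul_rpow_of_nonneg _ _ hαq0.le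
      _ = ENNReal.ofReal Cstar ^ (α * q) *
          (ENNReal.ofReal (CNps / 2) * G) ^ (α * q / p) := by
          rw [← ENNReal.rpow_mul]; congr 2; ring
      _ = ENNReal.ofReal Cstar ^ (α * q) *
          (ENNReal.ofReal p ^ (α * q / p) * Y ^ (α * q / p)) := by
          rw [hsplit, mul_assoc, ENNReal.mul_rpow_of_nonneg _ _ he1, hY]
  -- split the r-integral factor
  have he2 : (0:ℝ) ≤ (1 - α) * q / r := div_nonneg hαq0'.le hr0.le
  have hDe : D ^ ((1 - α) * q / r) = ENNReal.ofReal r ^ ((1 - α) * q / r) *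
      (ENNReal.ofReal (1 / r) * D) ^ ((1 - α) * q / r) := by
    have hDsplit : D = ENNReal.ofReal r * (ENNReal.ofReal (1 / r) * D) := by
      rw [← mul_assoc, ← ENNReal.ofReal_mul hr0.le, mul_one_div_cancel hr0.ne',
        ENNReal.ofReal_one, one_mul]
    conv_lhs => rw [hDsplit]
    exact ENNReal.mul_rpow_of_nonneg _ _ he2
  -- put everything together
  calc ENNReal.ofReal (1 / q) * A
      ≤ ENNReal.ofReal (1 / q) * (B ^ (α * q / pstar) * D ^ ((1 - α) * q / r)) :=
        by gcongr
    _ ≤ ENNReal.ofReal (1 / q) * ((ENNReal.ofReal Cstar ^ (α * q) *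
        (ENNReal.ofReal p ^ (α * q / p) * Y ^ (α * q / p))) * D ^ ((1 - α) * q / r)) :=
        by gcongr
    _ = ENNReal.ofReal (1 / q * Cstar ^ (α * q) * p ^ (α * q / p) * r ^ ((1 - α) * q / r)) *
        Y ^ (α * q / p) * (ENNReal.ofReal (1 / r) * D) ^ ((1 - α) * q / r) := by
        rw [hDe, ENNReal.ofReal_rpow_of_nonneg hCstar.le hαq0.le,
          ENNReal.ofReal_rpow_of_nonneg hp0.le he1,
          ENNReal.ofReal_rpow_of_nonneg hr0.le he2,
          ENNReal.ofReal_mul (by positivity), ENNReal.ofReal_mul (by positivity),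
          ENNReal.ofReal_mul (by positivity)]
        ring
end

section
/- Let N ≥ 1 be an integer, s ∈ (0,1), and let p, q, r ∈ [2, ∞) be real numbers with p < q, sp < N and r > N(q−p)/(sp). Let Ω ⊂ ℝ^N be a bounded open set, set p* := Np/(N−sp), C_{N,p,s} := s·2^{2s}·Γ((ps+p+N−2)/2)/(π^{N/2}·Γ(1−s)), ρ := p(q+r−2)/(r+p−2), and α := ((r+p−2)/(pr) − (r+p−2)/(p(q+r−2))) / ((r+p−2)/(pr) − (N−sp)/(Np)). Assume there exists a constant C_* > 0 such that for every measurable w : ℝ^N → ℝ vanishing almost everywhere outside Ω, (∫_Ω |w|^{p*} dx)^{1/p*} ≤ C_* · ( (C_{N,p,s}/2) ∬_{ℝ^N×ℝ^N} |w(x)−w(y)|^p/|x−y|^{N+sp} dx dy )^{1/p}. Then there is a constant C > 0, depending only on C_*, N, p, q, r, s, such that for every measurable u : ℝ^N → ℝ vanishing almost everywhere outside Ω with ∫_Ω |u|^r dx < ∞ and such that v := |u|^{(r−2)/p} u has finite Gagliardo p-energy, one has ∫_Ω |u|^{q+r−2} dx ≤ C · ( (C_{N,p,s}/2) ∬_{ℝ^N×ℝ^N}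 |v(x)−v(y)|^p/|x−y|^{N+sp} dx dy )^{αρ/p} · ( ∫_Ω |u|^r dx )^{(1−α)(q+r−2)/r}. -/
open MeasureTheory
open scoped ENNReal

set_option maxHeartbeats 1000000

/-- Core estimate (E4) in the proof of Lemma 3.4: assuming the fractional Sobolev
embedding `‖w‖_{L^{p*}(Ω)} ≤ C_* ‖w‖_{W_0^{s,p}(Ω)}` for functions vanishing outside
the bounded open set `Ω`, with `ρ = p(q+r-2)/(r+p-2)` and the interpolation exponent
`α`, there is `C > 0` such that for every `u` vanishing outside `Ω` with
`∫_Ω |u|^r < ∞` and such that `v = |u|^{(r-2)/p} u` has finite Gagliardo `p`-energy,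
`∫_Ω |u|^{q+r-2} ≤ C ((C_{N,p,s}/2) ∬ |v(x)-v(y)|^p/|x-y|^{N+sp})^{αρ/p}
(∫_Ω |u|^r)^{(1-α)(q+r-2)/r}`. -/
theorem lemma10_core_estimate (N : ℕ) (hN : 1 ≤ N) (s p q r : ℝ)
    (hs : 0 < s) (hs1 : s < 1) (hp : 2 ≤ p) (hq : 2 ≤ q) (hr : 2 ≤ r)
    (hpq : p < q) (hsp : s * p < N)
    (hlow : r > (N : ℝ) * (q - p) / (s * p))
    (Ω : Set (EuclideanSpace ℝ (Fin N))) (hΩo : IsOpen Ω)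
    (hΩb : Bornology.IsBounded Ω)
    (pstar CNps ρ α : ℝ)
    (hpstar : pstar = (N : ℝ) * p / ((N : ℝ) - s * p))
    (hCNps : CNps = s * 2 ^ (2 * s) * Real.Gamma ((p * s + p + (N : ℝ) - 2) / 2) /
      (Real.pi ^ ((N : ℝ) / 2) * Real.Gamma (1 - s)))
    (hρ : ρ = p * (q + r - 2) / (r + p - 2))
    (hα : α = ((r + p - 2) / (p * r) - (r + p - 2) / (p * (q + r - 2))) /
      ((r + p - 2) / (p * r) - ((N : ℝ) - s * p) / ((N : ℝ) * p)))
    (Cstar : ℝ) (hCstar : 0 < Cstar)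
    (hSob : ∀ w : EuclideanSpace ℝ (Fin N) → ℝ, Measurable w →
      (∀ᵐ x ∂(volume : Measure (EuclideanSpace ℝ (Fin N))), x ∉ Ω → w x = 0) →
      (∫⁻ x in Ω, ENNReal.ofReal (|w x| ^ pstar)) ^ (1 / pstar) ≤
        ENNReal.ofReal Cstar *
          (ENNReal.ofReal (CNps / 2) * gagliardoEnergy N s p w) ^ (1 / p)) :
    ∃ C : ℝ, 0 < C ∧ ∀ u v : EuclideanSpace ℝ (Fin N) → ℝ, Measurable u →
      (v = fun x => |u x| ^ ((r - 2) / p) * u x) →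
      (∀ᵐ x ∂(volume : Measure (EuclideanSpace ℝ (Fin N))), x ∉ Ω → u x = 0) →
      (∫⁻ x in Ω, ENNReal.ofReal (|u x| ^ r)) < ⊤ →
      gagliardoEnergy N s p v < ⊤ →
      (∫⁻ x in Ω, ENNReal.ofReal (|u x| ^ (q + r - 2))) ≤
        ENNReal.ofReal C *
          (ENNReal.ofReal (CNps / 2) * gagliardoEnergy N s p v) ^ (α * ρ / p) *
          (∫⁻ x in Ω, ENNReal.ofReal (|u x| ^ r)) ^ ((1 - α) * (q + r - 2) / r) := by
  have hN0 : (0:ℝ) < N := by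
    have h1 : (1:ℕ) ≤ N := hN
    exact_mod_cast Nat.lt_of_lt_of_le Nat.zero_lt_one h1
  have hp0 : (0:ℝ) < p := lt_of_lt_of_le two_pos hp
  have hr0 : (0:ℝ) < r := lt_of_lt_of_le two_pos hr
  have hq2 : 2 < q := lt_of_le_of_lt hp hpq
  have hNsp : (0:ℝ) < (N:ℝ) - s * p := sub_pos.mpr hsp
  have hrp2 : (0:ℝ) < r + p - 2 := by linarith
  have hqr2 : (0:ℝ) < q + r - 2 := by linarith
  have hpstar0 : 0 < pstar := by rw [hpstar]; positivity
  have hρ0 : 0 < ρ := by rw [hρ]; positivity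
  set t : ℝ := (r + p - 2) / p with ht
  have ht0 : 0 < t := by positivity
  set a : ℝ := p * r / (r + p - 2) with hadef
  have ha0 : 0 < a := by positivity
  -- reciprocal identities
  have h1a : (r + p - 2) / (p * r) = 1 / a := by rw [hadef, one_div_div]
  have h1ρ : (r + p - 2) / (p * (q + r - 2)) = 1 / ρ := by rw [hρ, one_div_div]
  have h1pstar : ((N : ℝ) - s * p) / ((N : ℝ) * p) = 1 / pstar := by
    rw [hpstar, one_div_div]
  have hα' : α = (1/a - 1/ρ) / (1/a - 1/pstar) := by rw [hα, h1a, h1ρ, h1pstar]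
  -- comparisons of exponents
  have haρ : a < ρ := by
    rw [hadef, hρ, div_lt_div_iff₀ hrp2 hrp2]
    nlinarith [mul_pos (mul_pos hp0 hrp2) (show (0:ℝ) < q - 2 by linarith)]
  have hρpstar : ρ < pstar := by
    rw [hρ, hpstar, div_lt_div_iff₀ hrp2 hNsp]
    have hlow' : (N : ℝ) * (q - p) < r * (s * p) := by
      have hsp0 : (0:ℝ) < s * p := mul_pos hs hp0
      exact (div_lt_iff₀ hsp0).mp hlow
    nlinarith [mul_lt_mul_of_pos_left hlow' hp0,
      mul_nonneg (mul_nonneg hs.le (mul_pos hp0 hp0).le) (by linarith : (0:ℝ) ≤ q - 2)]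
  have hapstar : a < pstar := haρ.trans hρpstar
  have hNum : (0:ℝ) < 1/a - 1/ρ := by
    have := one_div_lt_one_div_of_lt ha0 haρ
    linarith
  have hD : (0:ℝ) < 1/a - 1/pstar := by
    have := one_div_lt_one_div_of_lt ha0 hapstar
    linarith
  have hND : 1/a - 1/ρ < 1/a - 1/pstar := by
    have := one_div_lt_one_div_of_lt hρ0 hρpstar
    linarith
  have hα0 : 0 < α := by rw [hα']; exact div_pos hNum hD
  have hα1 : α < 1 := by rw [hα']; exact (div_lt_one hD).mpr hND
  have hαρ0 : 0 < α * ρ := mul_pos hα0 hρ0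
  have h1αρ0 : 0 < (1 - α) * ρ := mul_pos (by linarith) hρ0
  -- conjugate exponents
  have hαa : α * (1/a - 1/pstar) = 1/a - 1/ρ := by
    rw [hα', div_mul_cancel₀ _ hD.ne']
  have hconj : α * ρ / pstar + (1 - α) * ρ / a = 1 := by
    have h5 : α * ρ / pstar + (1 - α) * ρ / a = ρ * (1/a - α * (1/a - 1/pstar)) := by
      ring
    rw [h5, hαa, show 1/a - (1/a - 1/ρ) = 1/ρ by ring, mul_one_div, div_self hρ0.ne']
  -- key exponent products
  have htρ : t * ρ = q + r - 2 := by
    rw [ht, hρ]; field_simp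
  have hta : t * a = r := by
    rw [ht, hadef]; field_simp
  set P : ℝ := pstar / (α * ρ) with hPdef
  set Q : ℝ := a / ((1 - α) * ρ) with hQdef
  have hP1 : 1 < P := by
    rw [hPdef, lt_div_iff₀ hαρ0, one_mul]
    calc α * ρ < 1 * ρ := mul_lt_mul_of_pos_right hα1 hρ0
    _ = ρ := one_mul ρ
    _ < pstar := hρpstar
  have hPQ : P.HolderConjugate Q := by
    rw [Real.holderConjugate_iff]
    constructor
    · exact hP1
    · rw [hPdef, hQdef, ← one_div, ← one_div, one_div_div, one_div_div]
      exact hconj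
  refine ⟨Cstar ^ (α * ρ), Real.rpow_pos_of_pos hCstar _, ?_⟩
  intro u v hu hv hu0 _ _
  have hvmeas : Measurable v := by
    rw [hv]
    exact (hu.abs.pow measurable_const).mul hu
  have hv0 : ∀ᵐ x ∂(volume : Measure (EuclideanSpace ℝ (Fin N))), x ∉ Ω → v x = 0 := by
    filter_upwards [hu0] with x hx hmem
    rw [hv]; simp [hx hmem]
  have habsv : ∀ x, |v x| = |u x| ^ t := by
    intro x
    rw [hv]
    by_cases h : u x = 0
    · simp [h, Real.zero_rpow ht0.ne']
    · have h0 : (0:ℝ) < |u x| := abs_pos.mpr h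
      rw [abs_mul, abs_of_nonneg (Real.rpow_nonneg (abs_nonneg _) _)]
      rw [show t = (r - 2) / p + 1 by rw [ht]; field_simp; ring]
      rw [Real.rpow_add_one h0.ne']
  set g : EuclideanSpace ℝ (Fin N) → ℝ≥0∞ := fun x => ENNReal.ofReal |u x| with hgdef
  have hgmeas : Measurable g := hu.abs.ennreal_ofReal
  -- rewrite integrals in terms of g
  have hI1 : (∫⁻ x in Ω, ENNReal.ofReal (|u x| ^ (q + r - 2))) =
      ∫⁻ x in Ω, g x ^ (q + r - 2) :=
    lintegral_congr fun x => (ENNReal.ofReal_rpow_of_nonneg (abs_nonneg _) hqr2.le).symm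
  have hIr : (∫⁻ x in Ω, ENNReal.ofReal (|u x| ^ r)) = ∫⁻ x in Ω, g x ^ r :=
    lintegral_congr fun x => (ENNReal.ofReal_rpow_of_nonneg (abs_nonneg _) hr0.le).symm
  have hIA : (∫⁻ x in Ω, ENNReal.ofReal (|v x| ^ pstar)) =
      ∫⁻ x in Ω, g x ^ (t * pstar) := by
    refine lintegral_congr fun x => ?_
    rw [habsv, ← Real.rpow_mul (abs_nonneg _)]
    exact (ENNReal.ofReal_rpow_of_nonneg (abs_nonneg _) (by positivity)).symm
  -- Hölder
  have hHolder := ENNReal.lintegral_mul_le_Lp_mul_Lq (volume.restrict Ω) hPQ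
    (f := fun x => g x ^ (α * ρ * t)) (g := fun x => g x ^ ((1 - α) * ρ * t))
    ((hgmeas.pow measurable_const).aemeasurable)
    ((hgmeas.pow measurable_const).aemeasurable)
  have hHolder' : (∫⁻ x in Ω, g x ^ (q + r - 2)) ≤
      (∫⁻ x in Ω, g x ^ (t * pstar)) ^ (α * ρ / pstar) *
        (∫⁻ x in Ω, g x ^ r) ^ ((1 - α) * ρ / a) := by
    have e1 : (∫⁻ x in Ω, g x ^ (q + r - 2)) =
        ∫⁻ x in Ω, ((fun x => g x ^ (α * ρ * t)) * fun x => g x ^ ((1 - α) * ρ * t)) x := by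
      refine lintegral_congr fun x => ?_
      simp only [Pi.mul_apply]
      rw [← ENNReal.rpow_add_of_nonneg _ _ (by positivity) (by positivity)]
      congr 1
      rw [← htρ]; ring
    have e2 : (∫⁻ x in Ω, (fun x => g x ^ (α * ρ * t)) x ^ P) =
        ∫⁻ x in Ω, g x ^ (t * pstar) := by
      refine lintegral_congr fun x => ?_
      rw [← ENNReal.rpow_mul]
      congr 1
      rw [hPdef]
      field_simp
    have e3 : (∫⁻ x in Ω, (fun x => g x ^ ((1 - α) * ρ * t)) x ^ Q) =
        ∫⁻ x in Ω, g x ^ r := by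
      refine lintegral_congr fun x => ?_
      rw [← ENNReal.rpow_mul]
      congr 1
      rw [hQdef, ← hta]
      field_simp
      exact div_self (sub_ne_zero.mpr hα1.ne')
    have e4 : 1 / P = α * ρ / pstar := by rw [hPdef, one_div_div]
    have e5 : 1 / Q = (1 - α) * ρ / a := by rw [hQdef, one_div_div]
    calc (∫⁻ x in Ω, g x ^ (q + r - 2)) =
        ∫⁻ x in Ω, ((fun x => g x ^ (α * ρ * t)) * fun x => g x ^ ((1 - α) * ρ * t)) x := e1
      _ ≤ (∫⁻ x in Ω, (fun x => g x ^ (α * ρ * t)) x ^ P) ^ (1 / P) *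
            (∫⁻ x in Ω, (fun x => g x ^ ((1 - α) * ρ * t)) x ^ Q) ^ (1 / Q) := hHolder
      _ = (∫⁻ x in Ω, g x ^ (t * pstar)) ^ (α * ρ / pstar) *
            (∫⁻ x in Ω, g x ^ r) ^ ((1 - α) * ρ / a) := by rw [e2, e3, e4, e5]
  -- Sobolev part
  have hS := hSob v hvmeas hv0
  rw [hIA] at hS
  set E : ℝ≥0∞ := ENNReal.ofReal (CNps / 2) * gagliardoEnergy N s p v with hEdef
  have hS2 : (∫⁻ x in Ω, g x ^ (t * pstar)) ^ (α * ρ / pstar) ≤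
      ENNReal.ofReal (Cstar ^ (α * ρ)) * E ^ (α * ρ / p) := by
    have h3 : (∫⁻ x in Ω, g x ^ (t * pstar)) ^ (α * ρ / pstar) =
        ((∫⁻ x in Ω, g x ^ (t * pstar)) ^ (1 / pstar)) ^ (α * ρ) := by
      rw [← ENNReal.rpow_mul]
      congr 1
      field_simp
    rw [h3]
    calc ((∫⁻ x in Ω, g x ^ (t * pstar)) ^ (1 / pstar)) ^ (α * ρ)
        ≤ (ENNReal.ofReal Cstar * E ^ (1 / p)) ^ (α * ρ) :=
          ENNReal.rpow_le_rpow hS hαρ0.le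
      _ = ENNReal.ofReal (Cstar ^ (α * ρ)) * E ^ (α * ρ / p) := by
          rw [ENNReal.mul_rpow_of_nonneg _ _ hαρ0.le, ← ENNReal.rpow_mul,
            ENNReal.ofReal_rpow_of_pos hCstar]
          congr 1
          field_simp
  -- assemble
  have hexp : (1 - α) * ρ / a = (1 - α) * (q + r - 2) / r := by
    rw [hρ, hadef]
    field_simp
  rw [hI1, hIr]
  calc (∫⁻ x in Ω, g x ^ (q + r - 2)) ≤
      (∫⁻ x in Ω, g x ^ (t * pstar)) ^ (α * ρ / pstar) *
        (∫⁻ x in Ω, g x ^ r) ^ ((1 - α) * ρ / a) := hHolder'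
    _ ≤ (ENNReal.ofReal (Cstar ^ (α * ρ)) * E ^ (α * ρ / p)) *
        (∫⁻ x in Ω, g x ^ r) ^ ((1 - α) * ρ / a) := by gcongr
    _ = ENNReal.ofReal (Cstar ^ (α * ρ)) * E ^ (α * ρ / p) *
        (∫⁻ x in Ω, g x ^ r) ^ ((1 - α) * (q + r - 2) / r) := by rw [hexp]
end
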